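/- arXiv:0905.0008 — 8 statements merged into one kernel-verified Lean document; each statement's English description precedes it below -/
import Mathlib

section
/- Let D be (the combinatorial model of) an oriented r-component link diagram with Gauss words W^i and inter-crossing matrix m. Then d(D) + d(-D) + sr(D) ≤ c(D). Moreover, equality holds if and only if D has property C. -/
/-- A Gauss word on `n` labels: each label occurs exactly twice,
once with flag `true` (over-passage) and once with flag `false` (under-passage). -/
def IsGaussWord {n : ℕ} (W : List (Fin n × Bool)) : Prop :=
  ∀ i : Fin n, W.count (i, true) = 1 ∧ W.count (i, false) = 1

/-- Based warping degree: the number of labels whose first occurrence carries flag `false`. -/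
def basedWd {n : ℕ} (W : List (Fin n × Bool)) : ℕ :=
  (Finset.univ.filter fun i : Fin n =>
    W.idxOf (i, false) < W.idxOf (i, true)).card

/-- Warping degree of a Gauss word: minimum of the based warping degree
over all cyclic rotations. -/
noncomputable def wd {n : ℕ} (W : List (Fin n × Bool)) : ℕ :=
  sInf {v | ∃ k : ℕ, v = basedWd (W.rotate k)}

/-- A Gauss word is alternating if the flags of consecutive entries alternate. -/
def IsAlternating {n : ℕ} (W : List (Fin n × Bool)) : Prop :=
  W.Chain' fun x y => y.2 = !x.2

/-- Based linking warping degree for the ordering given by `σ`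
(component `i` precedes `j` when `σ i < σ j`). -/
def ldSigma {r : ℕ} (m : Fin r → Fin r → ℕ) (σ : Equiv.Perm (Fin r)) : ℕ :=
  ∑ p ∈ Finset.univ.filter (fun p : Fin r × Fin r => σ p.1 < σ p.2), m p.1 p.2

/-- Linking warping degree: minimum over all orderings. -/
noncomputable def linkLd {r : ℕ} (m : Fin r → Fin r → ℕ) : ℕ :=
  sInf {v | ∃ σ : Equiv.Perm (Fin r), v = ldSigma m σ}

/-- Linking crossing number: number of non-self crossings. -/
def lcNum {r : ℕ} (m : Fin r → Fin r → ℕ) : ℕ :=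
  ∑ p ∈ Finset.univ.filter (fun p : Fin r × Fin r => p.1 ≠ p.2), m p.1 p.2

/-- Warping degree of an ordered link diagram: minimum over all orderings `σ`
and all choices of cyclic rotations (base points) of the components. -/
noncomputable def linkWd {r : ℕ} {n : Fin r → ℕ} (W : ∀ i, List (Fin (n i) × Bool))
    (m : Fin r → Fin r → ℕ) : ℕ :=
  sInf {v | ∃ (σ : Equiv.Perm (Fin r)) (k : Fin r → ℕ),
    v = (∑ i, basedWd ((W i).rotate (k i))) + ldSigma m σ}

/-- Crossing number of the link diagram. -/
def crossingNum {r : ℕ} (n : Fin r → ℕ) (m : Fin r → Fin r → ℕ) : ℕ :=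
  (∑ i, n i) + ∑ p ∈ Finset.univ.filter (fun p : Fin r × Fin r => p.1 < p.2),
    (m p.1 p.2 + m p.2 p.1)

/-- The number of components having at least one self-crossing. -/
def srNum {r : ℕ} (n : Fin r → ℕ) : ℕ :=
  (Finset.univ.filter fun i : Fin r => 1 ≤ n i).card

/-- Property C: every component word is alternating and, for each pair of distinct
components, the number of over-crossings equals the number of under-crossings. -/
def PropertyC {r : ℕ} {n : Fin r → ℕ} (W : ∀ i, List (Fin (n i) × Bool))
    (m : Fin r → Fin r → ℕ) : Prop :=
  (∀ i, IsAlternating (W i)) ∧ ∀ i j : Fin r, i ≠ j → m i j = m j i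

namespace GaussAux

theorem beq_conv {α : Type} [DecidableEq α] (inst : BEq α) [@LawfulBEq α inst] :
    inst = instBEqOfDecidableEq := by
  have h2 : @LawfulBEq α instBEqOfDecidableEq := inferInstance
  exact @lawful_beq_subsingleton α inst instBEqOfDecidableEq ‹_› h2

variable {n : ℕ}

theorem beq_conv' : (instBEqProd : BEq (Fin n × Bool)) = instBEqOfDecidableEq :=
  beq_conv _

theorem gw_count {W : List (Fin n × Bool)} (hW : IsGaussWord W) (x : Fin n × Bool) :
    W.count x = 1 := by
  obtain ⟨i, b⟩ := x
  cases b
  · exact (hW i).2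
  · exact (hW i).1

theorem gw_mem {W : List (Fin n × Bool)} (hW : IsGaussWord W) (x : Fin n × Bool) : x ∈ W :=
  List.count_pos_iff.1 (by rw [gw_count hW x]; omega)

theorem gw_nodup {W : List (Fin n × Bool)} (hW : IsGaussWord W) : W.Nodup := by
  refine List.nodup_iff_count_le_one.2 fun a => ?_
  exact (gw_count hW a).le

theorem gw_length {W : List (Fin n × Bool)} (hW : IsGaussWord W) : W.length = 2 * n := by
  have h2 : W.toFinset = Finset.univ := by
    ext x
    simp [List.mem_toFinset, gw_mem hW x]
  have h3 := List.sum_toFinset_count_eq_length W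
  rw [h2] at h3
  rw [← beq_conv'] at h3
  rw [Finset.sum_congr rfl (fun x _ => gw_count hW x), Finset.sum_const, smul_eq_mul,
    mul_one] at h3
  simp [Finset.card_univ] at h3
  omega

theorem gw_rotate {W : List (Fin n × Bool)} (hW : IsGaussWord W) (k : ℕ) :
    IsGaussWord (W.rotate k) := by
  have key : ∀ x : Fin n × Bool, (W.rotate k).count x = W.count x := by
    intro x
    exact (List.rotate_perm W k).count_eq x
  intro i
  rw [key, key]
  exact hW i

theorem gw_reverse {W : List (Fin n × Bool)} (hW : IsGaussWord W) :
    IsGaussWord W.reverse := by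
  intro i
  rw [List.count_reverse, List.count_reverse]
  exact hW i

theorem indexOf_reverse {α : Type} [DecidableEq α] {l : List α} (h : l.Nodup) {a : α}
    (ha : a ∈ l) :
    l.reverse.idxOf a = l.length - 1 - l.idxOf a := by
  have h1 : l.idxOf a < l.length := List.idxOf_lt_length_iff.2 ha
  have h2 : l.length - 1 - l.idxOf a < l.reverse.length := by
    rw [List.length_reverse]; omega
  have h3 : l.reverse[l.length - 1 - l.idxOf a] = a := by
    rw [List.getElem_reverse]
    simp [show l.length - 1 - (l.length - 1 - l.idxOf a) = l.idxOf a by omega]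
  have h4 := List.get_idxOf (List.nodup_reverse.2 h)
    ⟨l.length - 1 - l.idxOf a, h2⟩
  rw [List.get_eq_getElem, h3] at h4
  exact h4

end GaussAux
-- continuation, testing with p1 prefix
namespace GaussAux
variable {n : ℕ}

theorem idx_cons_self (x : Fin n × Bool) (t : List (Fin n × Bool)) :
    (x :: t).idxOf x = 0 := by
  exact List.idxOf_cons_self

theorem idx_cons_ne {x y : Fin n × Bool} (t : List (Fin n × Bool)) (h : y ≠ x) :
    (y :: t).idxOf x = t.idxOf x + 1 := by
  exact List.idxOf_cons_ne t h

theorem idx_append_left {x : Fin n × Bool} {t s : List (Fin n × Bool)} (h : x ∈ t) :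
    (t ++ s).idxOf x = t.idxOf x := by
  exact List.idxOf_append_of_mem h

theorem idx_append_right {x : Fin n × Bool} {t s : List (Fin n × Bool)} (h : x ∉ t) :
    (t ++ s).idxOf x = t.length + s.idxOf x := by
  exact List.idxOf_append_of_notMem h

theorem idx_lt_length {x : Fin n × Bool} {t : List (Fin n × Bool)} (h : x ∈ t) :
    t.idxOf x < t.length := by
  exact List.idxOf_lt_length_iff.2 h

theorem idx_rev {W : List (Fin n × Bool)} (hW : IsGaussWord W) (x : Fin n × Bool) :
    W.reverse.idxOf x = W.length - 1 - W.idxOf x := by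
  rw [beq_conv']; exact indexOf_reverse (gw_nodup hW) (gw_mem hW x)

theorem idx_inj {W : List (Fin n × Bool)} (hW : IsGaussWord W) {x y : Fin n × Bool}
    (h : W.idxOf x = W.idxOf y) : x = y := by
  exact (List.idxOf_inj (gw_mem hW x)).1 h

theorem basedWd_le {W : List (Fin n × Bool)} : basedWd W ≤ n := by
  unfold basedWd
  calc (Finset.univ.filter _).card ≤ Finset.univ.card := Finset.card_filter_le _ _
  _ = n := by simp

/-- not in t -/
theorem not_mem_tail {i0 : Fin n} {b0 : Bool} {t : List (Fin n × Bool)}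
    (hW : IsGaussWord ((i0, b0) :: t)) : (i0, b0) ∉ t := by
  intro hmem
  have h1 : (((i0, b0) :: t).count (i0, b0)) = 1 := gw_count hW _
  rw [List.count_cons] at h1
  simp at h1
  have := List.count_pos_iff.2 hmem
  omega

theorem mem_tail {i0 : Fin n} {b0 : Bool} {t : List (Fin n × Bool)}
    (hW : IsGaussWord ((i0, b0) :: t)) {x : Fin n × Bool} (hx : x ≠ (i0, b0)) : x ∈ t := by
  have h1 := gw_mem hW x
  simp only [List.mem_cons] at h1
  tauto

theorem step {i0 : Fin n} {b0 : Bool} {t : List (Fin n × Bool)}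
    (hW : IsGaussWord ((i0, b0) :: t)) :
    (b0 = true → basedWd (t ++ [(i0, b0)]) = basedWd ((i0, b0) :: t) + 1) ∧
    (b0 = false → basedWd ((i0, b0) :: t) = basedWd (t ++ [(i0, b0)]) + 1) := by
  have hmem : (i0, !b0) ∈ t := mem_tail hW (by simp)
  have hnmem : (i0, b0) ∉ t := not_mem_tail hW
  -- indexOf computations
  have e1 : ((i0, b0) :: t).idxOf (i0, b0) = 0 := idx_cons_self _ _
  have e2 : ((i0, b0) :: t).idxOf (i0, !b0) = t.idxOf (i0, !b0) + 1 :=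
    idx_cons_ne _ (by simp)
  have e3 : (t ++ [(i0, b0)]).idxOf (i0, !b0) = t.idxOf (i0, !b0) :=
    idx_append_left hmem
  have e4 : (t ++ [(i0, b0)]).idxOf (i0, b0) = t.length := by
    rw [idx_append_right hnmem, idx_cons_self]; omega
  have hlt : t.idxOf (i0, !b0) < t.length := idx_lt_length hmem
  -- for labels other than i0 the condition is unchanged
  have hother : ∀ i : Fin n, i ≠ i0 →
      ((t ++ [(i0, b0)]).idxOf (i, false) < (t ++ [(i0, b0)]).idxOf (i, true) ↔
       ((i0, b0) :: t).idxOf (i, false) < ((i0, b0) :: t).idxOf (i, true)) := by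
    intro i hi
    have m1 : (i, false) ∈ t := mem_tail hW (by simp [hi])
    have m2 : (i, true) ∈ t := mem_tail hW (by simp [hi])
    rw [idx_append_left m1, idx_append_left m2, idx_cons_ne _ (by simp [hi.symm]),
      idx_cons_ne _ (by simp [hi.symm])]
    omega
  constructor
  · rintro rfl
    -- b0 = true : new word's filter = insert i0 old filter
    have hset : (Finset.univ.filter fun i : Fin n =>
        (t ++ [(i0, true)]).idxOf (i, false) < (t ++ [(i0, true)]).idxOf (i, true)) =
        insert i0 (Finset.univ.filter fun i : Fin n =>
        ((i0, true) :: t).idxOf (i, false) < ((i0, true) :: t).idxOf (i, true)) := by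
      ext i
      by_cases hi : i = i0
      · subst hi
        simp only [Finset.mem_insert, Finset.mem_filter, Finset.mem_univ, true_and]
        simp only [Bool.not_true] at e2 e3 hlt
        rw [e3, e4]
        simp [hlt]
      · simp only [Finset.mem_insert, Finset.mem_filter, Finset.mem_univ, true_and, hi,
          false_or]
        exact hother i hi
    have hnot : i0 ∉ (Finset.univ.filter fun i : Fin n =>
        ((i0, true) :: t).idxOf (i, false) < ((i0, true) :: t).idxOf (i, true)) := by
      simp only [Finset.mem_filter, Finset.mem_univ, true_and]
      simp only [Bool.not_true] at e2
      rw [e1, e2]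
      omega
    unfold basedWd
    rw [hset, Finset.card_insert_of_notMem hnot]
  · rintro rfl
    have hset : (Finset.univ.filter fun i : Fin n =>
        ((i0, false) :: t).idxOf (i, false) < ((i0, false) :: t).idxOf (i, true)) =
        insert i0 (Finset.univ.filter fun i : Fin n =>
        (t ++ [(i0, false)]).idxOf (i, false) < (t ++ [(i0, false)]).idxOf (i, true)) := by
      ext i
      by_cases hi : i = i0
      · subst hi
        simp only [Finset.mem_insert, Finset.mem_filter, Finset.mem_univ, true_and]
        simp only [Bool.not_false] at e2
        rw [e1, e2]
        simp
      · simp only [Finset.mem_insert, Finset.mem_filter, Finset.mem_univ, true_and, hi,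
          false_or]
        exact (hother i hi).symm
    have hnot : i0 ∉ (Finset.univ.filter fun i : Fin n =>
        (t ++ [(i0, false)]).idxOf (i, false) < (t ++ [(i0, false)]).idxOf (i, true)) := by
      simp only [Finset.mem_filter, Finset.mem_univ, true_and]
      simp only [Bool.not_false] at e3 hlt
      rw [e3, e4]
      omega
    unfold basedWd
    rw [hset, Finset.card_insert_of_notMem hnot]

end GaussAux

namespace GaussAux
variable {n : ℕ}

theorem basedWd_reverse {W : List (Fin n × Bool)} (hW : IsGaussWord W) :
    basedWd W.reverse = n - basedWd W := by
  have hcompl : ∀ i : Fin n,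
      (W.reverse.idxOf (i, false) < W.reverse.idxOf (i, true) ↔
        ¬ (W.idxOf (i, false) < W.idxOf (i, true))) := by
    intro i
    rw [idx_rev hW, idx_rev hW]
    have h1 : W.idxOf (i, false) < W.length := idx_lt_length (gw_mem hW _)
    have h2 : W.idxOf (i, true) < W.length := idx_lt_length (gw_mem hW _)
    have h3 : W.idxOf (i, false) ≠ W.idxOf (i, true) := by
      intro h
      have := idx_inj hW h
      simp at this
    omega
  unfold basedWd
  rw [Finset.filter_congr (fun i _ => by rw [hcompl i]), Finset.filter_not,
    Finset.card_sdiff_of_subset (Finset.filter_subset _ _)]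
  simp [Finset.card_univ]

theorem rot_rev {α : Type} (l : List α) {j : ℕ} (hj : j ≤ l.length) :
    (l.rotate j).reverse = l.reverse.rotate (l.length - j) := by
  rw [List.rotate_eq_drop_append_take hj, List.reverse_append,
      List.rotate_eq_drop_append_take (by rw [List.length_reverse]; omega)]
  congr 1
  · exact List.reverse_take
  · rw [List.take_reverse]
    congr 2
    omega

/-- The step lemma transported to rotations. -/
theorem step_rot {W : List (Fin n × Bool)} (hW : IsGaussWord W) (hn : 0 < W.length) (k : ℕ)
    (hlt : k % W.length < W.length) :
    ((W.get ⟨k % W.length, hlt⟩).2 = true →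
      basedWd (W.rotate (k + 1)) = basedWd (W.rotate k) + 1) ∧
    ((W.get ⟨k % W.length, hlt⟩).2 = false →
      basedWd (W.rotate k) = basedWd (W.rotate (k + 1)) + 1) := by
  have hne : W.rotate k ≠ [] := by
    intro h
    have := List.length_rotate W k
    rw [h] at this
    simp at this
    omega
  obtain ⟨h, t, hht⟩ := List.exists_cons_of_ne_nil hne
  have hhead : W.get ⟨k % W.length, hlt⟩ = h := by
    have := List.getElem?_rotate (l := W) (n := k) (m := 0) hn
    rw [hht] at this
    simp only [Nat.zero_add, List.getElem?_eq_getElem hlt, List.getElem?_cons_zero,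
      Option.some.injEq] at this
    rw [List.get_eq_getElem]; exact this.symm
  have hrot1 : W.rotate (k + 1) = t ++ [h] := by
    rw [← List.rotate_rotate, hht, List.rotate_cons_succ, List.rotate_zero]
  have hWk : IsGaussWord (h :: t) := by rw [← hht]; exact gw_rotate hW k
  obtain ⟨i0, b0⟩ := h
  have hstep := step hWk
  constructor
  · intro hb
    rw [hhead] at hb
    rw [hrot1, hht]
    exact hstep.1 hb
  · intro hb
    rw [hhead] at hb
    rw [hrot1, hht]
    exact hstep.2 hb

end GaussAux

namespace GaussAux
variable {n : ℕ}

/-- The set of based warping degrees over all rotations. -/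
def rotSet {n : ℕ} (W : List (Fin n × Bool)) : Set ℕ :=
  {v | ∃ k : ℕ, v = basedWd (W.rotate k)}

theorem wd_eq (W : List (Fin n × Bool)) : wd W = sInf (rotSet W) := rfl

theorem rotSet_nonempty (W : List (Fin n × Bool)) : (rotSet W).Nonempty :=
  ⟨basedWd W, 0, by rw [List.rotate_zero]⟩

theorem rotSet_le (W : List (Fin n × Bool)) : ∀ v ∈ rotSet W, v ≤ n := by
  rintro v ⟨k, rfl⟩
  exact basedWd_le

theorem rotSet_bdd (W : List (Fin n × Bool)) : BddAbove (rotSet W) :=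
  ⟨n, fun v hv => rotSet_le W v hv⟩

theorem sSup_le_n (W : List (Fin n × Bool)) : sSup (rotSet W) ≤ n :=
  csSup_le (rotSet_nonempty W) (rotSet_le W)

theorem mem_rotSet_bounds {W : List (Fin n × Bool)} (k : ℕ) :
    sInf (rotSet W) ≤ basedWd (W.rotate k) ∧ basedWd (W.rotate k) ≤ sSup (rotSet W) :=
  ⟨Nat.sInf_le ⟨k, rfl⟩, le_csSup (rotSet_bdd W) ⟨k, rfl⟩⟩

theorem wd_rev_eq {W : List (Fin n × Bool)} (hW : IsGaussWord W) (hn : 0 < n) :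
    wd W.reverse = n - sSup (rotSet W) := by
  have hlen : W.length = 2 * n := gw_length hW
  have hlenpos : 0 < W.length := by omega
  rw [wd_eq]
  apply le_antisymm
  · -- find a rotation of the reverse realizing n - sSup
    obtain ⟨k0, hk0⟩ := Nat.sSup_mem (rotSet_nonempty W) (rotSet_bdd W)
    have hk0' : basedWd (W.rotate (k0 % W.length)) = sSup (rotSet W) := by
      rw [List.rotate_mod]; exact hk0.symm
    have hk0lt : k0 % W.length < W.length := Nat.mod_lt _ hlenpos
    have hj : W.length - (W.length - k0 % W.length) = k0 % W.length := by omega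
    have hrr := rot_rev W (j := k0 % W.length) (le_of_lt hk0lt)
    have hmem : n - sSup (rotSet W) ∈ rotSet W.reverse := by
      refine ⟨W.length - k0 % W.length, ?_⟩
      have hlenrev : W.reverse.length = W.length := List.length_reverse
      rw [show W.length - k0 % W.length = W.reverse.length - k0 % W.length by rw [hlenrev]]
      rw [show W.reverse.rotate (W.reverse.length - k0 % W.length)
            = W.reverse.rotate (W.length - k0 % W.length) by rw [hlenrev]]
      rw [← hrr, basedWd_reverse (gw_rotate hW _), hk0']
    exact Nat.sInf_le hmem
  · refine le_csInf (rotSet_nonempty _) ?_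
    rintro v ⟨k, rfl⟩
    have hlenrev : W.reverse.length = W.length := List.length_reverse
    have hk' : W.reverse.rotate k = W.reverse.rotate (k % W.length) := by
      conv_lhs => rw [← List.rotate_mod]
      rw [hlenrev]
    have hklt : k % W.length < W.length := Nat.mod_lt _ hlenpos
    set j := W.length - k % W.length with hjdef
    have hjle : j ≤ W.length := by omega
    have hrr := rot_rev W (j := j) hjle
    have : W.length - j = k % W.length := by omega
    rw [this] at hrr
    rw [hk', ← hrr, basedWd_reverse (gw_rotate hW _)]
    have hb := (mem_rotSet_bounds (W := W) j).2
    have := sSup_le_n W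
    omega

theorem osc_ge_one {W : List (Fin n × Bool)} (hW : IsGaussWord W) (hn : 0 < n) :
    sInf (rotSet W) + 1 ≤ sSup (rotSet W) := by
  have hlen : W.length = 2 * n := gw_length hW
  have hlenpos : 0 < W.length := by omega
  have hlt : 0 % W.length < W.length := Nat.mod_lt _ hlenpos
  have hs := step_rot hW hlenpos 0 hlt
  simp only [show (0:ℕ)+1 = 1 from rfl] at hs
  have h0 := mem_rotSet_bounds (W := W) 0
  have h1 := mem_rotSet_bounds (W := W) 1
  cases hb : (W.get ⟨0 % W.length, hlt⟩).2
  · have := hs.2 hb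
    omega
  · have := hs.1 hb
    omega

end GaussAux

namespace GaussAux
variable {n : ℕ}

theorem flag_parity {W : List (Fin n × Bool)} (hW : IsGaussWord W) (hA : IsAlternating W)
    (h0 : 0 < W.length) :
    ∀ p (hp : p < W.length),
      (W.get ⟨p, hp⟩).2 = if p % 2 = 0 then (W.get ⟨0, h0⟩).2 else !(W.get ⟨0, h0⟩).2 := by
  have hc := List.isChain_iff_getElem.1 hA
  intro p
  induction p with
  | zero => intro hp; simp
  | succ q ih =>
    intro hp
    have hq : q + 1 < W.length := by omega
    have := hc q hq
    rw [List.get_eq_getElem, this]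
    have ih' := ih (by omega)
    simp only [List.get_eq_getElem] at ih' ⊢
    rw [ih']
    rcases Nat.even_or_odd q with he | ho
    · have h1 : q % 2 = 0 := Nat.even_iff.1 he
      have h2 : (q + 1) % 2 = 1 := by omega
      simp [h1, h2]
    · have h1 : q % 2 = 1 := Nat.odd_iff.1 ho
      have h2 : (q + 1) % 2 = 0 := by omega
      simp [h1, h2]

theorem alternating_osc {W : List (Fin n × Bool)} (hW : IsGaussWord W) (hA : IsAlternating W)
    (hn : 0 < n) : sSup (rotSet W) ≤ sInf (rotSet W) + 1 := by
  have hlen : W.length = 2 * n := gw_length hW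
  have hlenpos : 0 < W.length := by omega
  set b := (W.get ⟨0, hlenpos⟩).2 with hbdef
  have hflag : ∀ k : ℕ, ∀ (hlt : k % W.length < W.length),
      (W.get ⟨k % W.length, hlt⟩).2 = if k % 2 = 0 then b else !b := by
    intro k hlt
    rw [flag_parity hW hA hlenpos (k % W.length) hlt]
    have : k % W.length % 2 = k % 2 := by
      rw [hlen]; exact Nat.mod_mod_of_dvd k ⟨n, by ring⟩
    rw [this]
  -- step at any k, with parity-determined direction
  have hstep : ∀ k : ℕ,
      (k % 2 = 0 → ((b = true → basedWd (W.rotate (k+1)) = basedWd (W.rotate k) + 1) ∧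
        (b = false → basedWd (W.rotate k) = basedWd (W.rotate (k+1)) + 1))) ∧
      (k % 2 = 1 → ((b = true → basedWd (W.rotate k) = basedWd (W.rotate (k+1)) + 1) ∧
        (b = false → basedWd (W.rotate (k+1)) = basedWd (W.rotate k) + 1))) := by
    intro k
    have hlt : k % W.length < W.length := Nat.mod_lt _ hlenpos
    have hs := step_rot hW hlenpos k hlt
    have hf := hflag k hlt
    constructor
    · intro hk
      constructor
      · intro hb; exact hs.1 (by rw [hf]; simp [hk, hb])
      · intro hb; exact hs.2 (by rw [hf]; simp [hk, hb])
    · intro hk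
      constructor
      · intro hb; exact hs.2 (by rw [hf]; simp [hk, hb])
      · intro hb; exact hs.1 (by rw [hf]; simp [hk, hb])
  -- two-periodicity
  have hper : ∀ j : ℕ, basedWd (W.rotate (2*j)) = basedWd (W.rotate 0) ∧
      basedWd (W.rotate (2*j+1)) = basedWd (W.rotate 1) := by
    intro j
    induction j with
    | zero => constructor <;> norm_num
    | succ q ih =>
      have e0 : (2*q) % 2 = 0 := by omega
      have e1 : (2*q+1) % 2 = 1 := by omega
      have e2 : (2*q+2) % 2 = 0 := by omega
      have s0 := (hstep (2*q)).1 e0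
      have s1 := (hstep (2*q+1)).2 e1
      have s2 := (hstep (2*q+2)).1 e2
      have s00 := (hstep 0).1 (by norm_num)
      simp only [show (2*q:ℕ)+1+1 = 2*q+2 from by ring] at s1
      simp only [show (2*q:ℕ)+2+1 = 2*q+3 from by ring] at s2
      simp only [show (0:ℕ)+1 = 1 from rfl] at s00
      rw [show 2*(q+1)+1 = 2*q+3 from by ring, show 2*(q+1) = 2*q+2 from by ring]
      cases hb : b
      · have a1 := s0.2 hb
        have a2 := s1.2 hb
        have a3 := s2.2 hb
        have a4 := s00.2 hb
        constructor <;> omega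
      · have a1 := s0.1 hb
        have a2 := s1.1 hb
        have a3 := s2.1 hb
        have a4 := s00.1 hb
        constructor <;> omega
  -- every value is f0 or f1
  have hvals : ∀ v ∈ rotSet W, v = basedWd (W.rotate 0) ∨ v = basedWd (W.rotate 1) := by
    rintro v ⟨k, rfl⟩
    rcases Nat.even_or_odd k with he | ho
    · obtain ⟨j, hj⟩ := he
      left; rw [show k = 2*j from by omega]; exact (hper j).1
    · obtain ⟨j, hj⟩ := ho
      right; rw [show k = 2*j+1 from hj]; exact (hper j).2
  have hb0 := mem_rotSet_bounds (W := W) 0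
  have hb1 := mem_rotSet_bounds (W := W) 1
  -- f1 = f0 ± 1
  have hstep0 := (hstep 0).1 (by norm_num)
  have hdiff : basedWd (W.rotate 1) = basedWd (W.rotate 0) + 1 ∨
      basedWd (W.rotate 0) = basedWd (W.rotate 1) + 1 := by
    cases hb : b
    · right; have := hstep0.2 hb; simpa using this
    · left; have := hstep0.1 hb; simpa using this
  have hsup : sSup (rotSet W) ≤ max (basedWd (W.rotate 0)) (basedWd (W.rotate 1)) := by
    refine csSup_le (rotSet_nonempty W) ?_
    intro v hv
    rcases hvals v hv with h | h <;> omega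
  have hinf : min (basedWd (W.rotate 0)) (basedWd (W.rotate 1)) ≤ sInf (rotSet W) := by
    refine le_csInf (rotSet_nonempty W) ?_
    intro v hv
    rcases hvals v hv with h | h <;> omega
  omega

theorem osc_alternating {W : List (Fin n × Bool)} (hW : IsGaussWord W) (hn : 0 < n)
    (hosc : sSup (rotSet W) ≤ sInf (rotSet W) + 1) : IsAlternating W := by
  have hlen : W.length = 2 * n := gw_length hW
  have hlenpos : 0 < W.length := by omega
  rw [IsAlternating]; change List.IsChain _ W; rw [List.isChain_iff_getElem]
  intro i hi
  by_contra hne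
  have heq : (W.get ⟨i+1, by omega⟩).2 = (W.get ⟨i, by omega⟩).2 := by
    cases h1 : (W.get ⟨i, by omega⟩).2 <;> cases h2 : (W.get ⟨i+1, by omega⟩).2 <;>
      simp_all
  have hm1 : i % W.length = i := Nat.mod_eq_of_lt (by omega)
  have hm2 : (i+1) % W.length = i + 1 := Nat.mod_eq_of_lt (by omega)
  have hs1 := step_rot hW hlenpos i (by rw [hm1]; omega)
  have hs2 := step_rot hW hlenpos (i+1) (by rw [hm2]; omega)
  have hbi := mem_rotSet_bounds (W := W) i
  have hbi2 := mem_rotSet_bounds (W := W) (i+2)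
  have hosc' := osc_ge_one hW hn
  rcases hcase : (W.get ⟨i, by omega⟩).2 with _ | _
  · -- flag i = false, flag (i+1) = false
    have f1 : basedWd (W.rotate i) = basedWd (W.rotate (i+1)) + 1 := by
      apply hs1.2
      have : (⟨i % W.length, by rw [hm1]; omega⟩ : Fin W.length) = ⟨i, by omega⟩ := by
        simp [hm1]
      rw [this]; exact hcase
    have f2 : basedWd (W.rotate (i+1)) = basedWd (W.rotate (i+2)) + 1 := by
      have := hs2.2
      have heq2 : (⟨(i+1) % W.length, by rw [hm2]; omega⟩ : Fin W.length)
          = ⟨i+1, by omega⟩ := by simp [hm2]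
      rw [heq2] at this
      have := this (by rw [heq, hcase])
      simpa using this
    omega
  · have f1 : basedWd (W.rotate (i+1)) = basedWd (W.rotate i) + 1 := by
      apply hs1.1
      have : (⟨i % W.length, by rw [hm1]; omega⟩ : Fin W.length) = ⟨i, by omega⟩ := by
        simp [hm1]
      rw [this]; exact hcase
    have f2 : basedWd (W.rotate (i+2)) = basedWd (W.rotate (i+1)) + 1 := by
      have := hs2.1
      have heq2 : (⟨(i+1) % W.length, by rw [hm2]; omega⟩ : Fin W.length)
          = ⟨i+1, by omega⟩ := by simp [hm2]
      rw [heq2] at this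
      have := this (by rw [heq, hcase])
      simpa using this
    omega

end GaussAux

namespace GaussAux
variable {n : ℕ}

theorem comp_main {W : List (Fin n × Bool)} (hW : IsGaussWord W) :
    (wd W + wd W.reverse + (if 1 ≤ n then 1 else 0) ≤ n) ∧
    ((wd W + wd W.reverse + (if 1 ≤ n then 1 else 0) = n) ↔ IsAlternating W) := by
  by_cases hn : 1 ≤ n
  · have h2 : wd W.reverse = n - sSup (rotSet W) := wd_rev_eq hW (by omega)
    have h1 : wd W = sInf (rotSet W) := rfl
    have hosc := osc_ge_one hW (by omega)
    have hsup := sSup_le_n W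
    rw [if_pos hn, h1, h2]
    constructor
    · omega
    · constructor
      · intro he
        exact osc_alternating hW (by omega) (by omega)
      · intro hA
        have := alternating_osc hW hA (by omega)
        omega
  · have hn0 : n = 0 := by omega
    have hwd1 : wd W = 0 := by
      have hm : basedWd W ∈ rotSet W := ⟨0, by rw [List.rotate_zero]⟩
      have h := Nat.sInf_le hm
      have := basedWd_le (W := W)
      rw [wd_eq]
      omega
    have hwd2 : wd W.reverse = 0 := by
      have hm : basedWd W.reverse ∈ rotSet W.reverse := ⟨0, by rw [List.rotate_zero]⟩
      have h := Nat.sInf_le hm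
      have := basedWd_le (W := W.reverse)
      rw [wd_eq]
      omega
    have hWnil : W = [] := by
      have hl := gw_length hW
      have : W.length = 0 := by omega
      exact List.length_eq_zero_iff.1 this
    rw [if_neg hn, hwd1, hwd2, hWnil]
    constructor
    · omega
    · simp only [IsAlternating, List.Chain', List.isChain_nil, iff_true]
      omega

end GaussAux

namespace LinkAux
variable {r : ℕ}

theorem swap_sum (P : Fin r × Fin r → Prop) [DecidablePred P] (f : Fin r → Fin r → ℕ) :
    ∑ p ∈ Finset.univ.filter P, f p.1 p.2
      = ∑ p ∈ Finset.univ.filter (fun p : Fin r × Fin r => P p.swap), f p.2 p.1 := by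
  rw [Finset.sum_filter, Finset.sum_filter]
  refine Fintype.sum_equiv (Equiv.prodComm _ _) _ _ ?_
  intro x
  simp

theorem filter_rev (m : Fin r → Fin r → ℕ) (σ : Equiv.Perm (Fin r)) :
    ldSigma m (σ.trans Fin.revPerm)
      = ∑ p ∈ Finset.univ.filter (fun p : Fin r × Fin r => σ p.2 < σ p.1), m p.1 p.2 := by
  unfold ldSigma
  congr 1
  apply Finset.filter_congr
  intro p _
  simp only [Equiv.trans_apply, Fin.revPerm_apply, Fin.rev_lt_rev]

theorem ldSigma_add_rev (m : Fin r → Fin r → ℕ) (σ : Equiv.Perm (Fin r)) :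
    ldSigma m σ + ldSigma m (σ.trans Fin.revPerm) = lcNum m := by
  rw [filter_rev]
  unfold ldSigma lcNum
  rw [← Finset.sum_filter_add_sum_filter_not
    (Finset.univ.filter (fun p : Fin r × Fin r => p.1 ≠ p.2))
    (fun p => σ p.1 < σ p.2)]
  congr 1
  · rw [Finset.filter_filter]
    congr 1
    apply Finset.filter_congr
    intro p _
    constructor
    · intro h; exact ⟨fun he => absurd (congrArg σ he) (ne_of_lt h), h⟩
    · tauto
  · rw [Finset.filter_filter]
    congr 1
    apply Finset.filter_congr
    intro p _
    constructor
    · intro h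
      exact ⟨fun he => absurd (congrArg σ he) (ne_of_gt h), not_lt_of_gt h⟩
    · rintro ⟨hne, hnlt⟩
      rcases lt_or_gt_of_ne (fun he : σ p.1 = σ p.2 => hne (σ.injective he)) with h | h
      · exact absurd h hnlt
      · exact h

theorem linkLd_le (m : Fin r → Fin r → ℕ) (σ : Equiv.Perm (Fin r)) :
    linkLd m ≤ ldSigma m σ := Nat.sInf_le ⟨σ, rfl⟩

theorem linkLd_mem (m : Fin r → Fin r → ℕ) :
    ∃ σ : Equiv.Perm (Fin r), linkLd m = ldSigma m σ := by
  have h : {v | ∃ σ : Equiv.Perm (Fin r), v = ldSigma m σ}.Nonempty := ⟨ldSigma m 1, 1, rfl⟩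
  exact Nat.sInf_mem h

theorem two_linkLd_le (m : Fin r → Fin r → ℕ) : 2 * linkLd m ≤ lcNum m := by
  have h := ldSigma_add_rev m 1
  have h1 := linkLd_le m 1
  have h2 := linkLd_le m ((1 : Equiv.Perm (Fin r)).trans Fin.revPerm)
  omega

theorem ldSigma_rev_of_symm {m : Fin r → Fin r → ℕ}
    (hsym : ∀ i j : Fin r, i ≠ j → m i j = m j i) (σ : Equiv.Perm (Fin r)) :
    ldSigma m (σ.trans Fin.revPerm) = ldSigma m σ := by
  rw [filter_rev, swap_sum (fun p : Fin r × Fin r => σ p.2 < σ p.1) m]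
  unfold ldSigma
  refine Finset.sum_congr ?_ ?_
  · apply Finset.filter_congr
    intro p _
    simp
  · intro p hp
    simp only [Finset.mem_filter] at hp
    refine hsym p.2 p.1 (fun he => ?_)
    have : σ p.1 < σ p.2 := by simpa using hp.2
    exact absurd (congrArg σ he) (ne_of_gt this)

theorem link_eq_of_symm {m : Fin r → Fin r → ℕ}
    (hsym : ∀ i j : Fin r, i ≠ j → m i j = m j i) : 2 * linkLd m = lcNum m := by
  obtain ⟨σ0, hσ0⟩ := linkLd_mem m
  have h := ldSigma_add_rev m σ0
  rw [ldSigma_rev_of_symm hsym] at h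
  omega

end LinkAux

namespace LinkAux
variable {r : ℕ}

theorem swap01_lt {z o : Fin r} (hz : z.val = 0) (ho : o.val = 1) {a b : Fin r}
    (h1 : ¬(a = z ∧ b = o)) (h2 : ¬(a = o ∧ b = z)) :
    (Equiv.swap z o a < Equiv.swap z o b ↔ a < b) := by
  have hval : ∀ x y : Fin r, x ≠ y → x.val ≠ y.val := by
    intro x y hxy hv
    exact hxy (Fin.val_injective hv)
  by_cases ha1 : a = z
  · rw [ha1, Equiv.swap_apply_left]
    have hb2 : b ≠ o := fun h => h1 ⟨ha1, h⟩
    by_cases hb1 : b = z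
    · rw [hb1, Equiv.swap_apply_left]
      simp
    · rw [Equiv.swap_apply_of_ne_of_ne hb1 hb2]
      have h3 := hval _ _ hb1
      have h4 := hval _ _ hb2
      rw [Fin.lt_def, Fin.lt_def]
      have := congrArg Fin.val ha1
      omega
  · by_cases ha2 : a = o
    · rw [ha2, Equiv.swap_apply_right]
      have hb1' : b ≠ z := fun h => h2 ⟨ha2, h⟩
      by_cases hb2 : b = o
      · rw [hb2, Equiv.swap_apply_right]
        simp
      · rw [Equiv.swap_apply_of_ne_of_ne hb1' hb2]
        have h3 := hval _ _ hb1'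
        have h4 := hval _ _ hb2
        rw [Fin.lt_def, Fin.lt_def]
        have := congrArg Fin.val ha2
        omega
    · rw [Equiv.swap_apply_of_ne_of_ne ha1 ha2]
      have h3 := hval _ _ ha1
      have h4 := hval _ _ ha2
      by_cases hb1 : b = z
      · rw [hb1, Equiv.swap_apply_left, Fin.lt_def, Fin.lt_def]
        have := congrArg Fin.val hb1
        omega
      · by_cases hb2 : b = o
        · rw [hb2, Equiv.swap_apply_right, Fin.lt_def, Fin.lt_def]
          have := congrArg Fin.val hb2
          omega
        · rw [Equiv.swap_apply_of_ne_of_ne hb1 hb2]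

theorem ldSigma_const {m : Fin r → Fin r → ℕ} (heq : 2 * linkLd m = lcNum m)
    (σ : Equiv.Perm (Fin r)) : ldSigma m σ = linkLd m := by
  have h := ldSigma_add_rev m σ
  have h1 := linkLd_le m σ
  have h2 := linkLd_le m (σ.trans Fin.revPerm)
  omega

theorem symm_of_link_eq {m : Fin r → Fin r → ℕ} (heq : 2 * linkLd m = lcNum m) :
    ∀ i j : Fin r, i ≠ j → m i j = m j i := by
  intro i j hij
  have hr2 : 2 ≤ r := by
    by_contra h
    have hi := i.isLt
    have hj := j.isLt
    exact hij (Fin.ext (by omega))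
  set z : Fin r := ⟨0, by omega⟩ with hzdef
  set o : Fin r := ⟨1, by omega⟩ with hodef
  have hzval : z.val = 0 := rfl
  have hoval : o.val = 1 := rfl
  have hzo : z < o := by rw [Fin.lt_def]; omega
  have hozF : ¬ (o < z) := by rw [Fin.lt_def]; omega
  set a : Equiv.Perm (Fin r) := Equiv.swap i z with hadef
  have hai : a i = z := Equiv.swap_apply_left i z
  have haj : a j ≠ z := by
    intro h
    rw [← hai] at h
    exact hij (a.injective h).symm
  have hzo' : z ≠ o := by
    intro h
    have := congrArg Fin.val h
    omega
  set b : Equiv.Perm (Fin r) := Equiv.swap (a j) o with hbdef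
  set σ : Equiv.Perm (Fin r) := a.trans b with hsdef
  have hσi : σ i = z := by
    show b (a i) = z
    rw [hai]
    exact Equiv.swap_apply_of_ne_of_ne (Ne.symm haj) hzo'
  have hσj : σ j = o := by
    show b (a j) = o
    exact Equiv.swap_apply_left _ _
  set τ : Equiv.Perm (Fin r) := σ.trans (Equiv.swap z o) with htdef
  have hτ : ∀ p : Fin r, τ p = Equiv.swap z o (σ p) := fun p => rfl
  have hτi : τ i = o := by rw [hτ, hσi, Equiv.swap_apply_left]
  have hτj : τ j = z := by rw [hτ, hσj, Equiv.swap_apply_right]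
  set A : Finset (Fin r × Fin r) :=
    Finset.univ.filter (fun p : Fin r × Fin r => σ p.1 < σ p.2) with hAdef
  set B : Finset (Fin r × Fin r) :=
    Finset.univ.filter (fun p : Fin r × Fin r => τ p.1 < τ p.2) with hBdef
  have hijA : (i, j) ∈ A := by
    rw [hAdef]
    simp only [Finset.mem_filter, Finset.mem_univ, true_and]
    rw [hσi, hσj]
    exact hzo
  have hjiB : (j, i) ∈ B := by
    rw [hBdef]
    simp only [Finset.mem_filter, Finset.mem_univ, true_and]
    rw [hτi, hτj]
    exact hzo
  have hcomp : ∀ p : Fin r × Fin r, p ≠ (i, j) → p ≠ (j, i) →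
      (τ p.1 < τ p.2 ↔ σ p.1 < σ p.2) := by
    intro p hp1 hp2
    rw [hτ, hτ]
    apply swap01_lt hzval hoval
    · rintro ⟨e1, e2⟩
      apply hp1
      have f1 : p.1 = i := σ.injective (by rw [e1, hσi])
      have f2 : p.2 = j := σ.injective (by rw [e2, hσj])
      rw [← f1, ← f2]
    · rintro ⟨e1, e2⟩
      apply hp2
      have f1 : p.1 = j := σ.injective (by rw [e1, hσj])
      have f2 : p.2 = i := σ.injective (by rw [e2, hσi])
      rw [← f1, ← f2]
  have hAB : A.erase (i, j) = B.erase (j, i) := by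
    ext p
    simp only [Finset.mem_erase, hAdef, hBdef, Finset.mem_filter, Finset.mem_univ, true_and]
    by_cases hp1 : p = (i, j)
    · subst hp1
      constructor
      · rintro ⟨h, _⟩
        exact absurd rfl h
      · rintro ⟨-, hlt⟩
        rw [show ((i, j) : Fin r × Fin r).1 = i from rfl,
          show ((i, j) : Fin r × Fin r).2 = j from rfl, hτi, hτj] at hlt
        exact absurd hlt hozF
    · by_cases hp2 : p = (j, i)
      · subst hp2
        constructor
        · rintro ⟨-, hlt⟩
          rw [show ((j, i) : Fin r × Fin r).1 = j from rfl,
            show ((j, i) : Fin r × Fin r).2 = i from rfl, hσj, hσi] at hlt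
          exact absurd hlt hozF
        · rintro ⟨h, -⟩
          exact absurd rfl h
      · rw [hcomp p hp1 hp2]
        constructor
        · rintro ⟨-, h⟩
          exact ⟨hp2, h⟩
        · rintro ⟨-, h⟩
          exact ⟨hp1, h⟩
  have hc1 : ldSigma m σ = linkLd m := ldSigma_const heq σ
  have hc2 : ldSigma m τ = linkLd m := ldSigma_const heq τ
  have h1 : (∑ p ∈ A.erase (i, j), m p.1 p.2) + m i j = linkLd m :=
    (Finset.sum_erase_add A (fun p => m p.1 p.2) hijA).trans hc1
  have h2 : (∑ p ∈ B.erase (j, i), m p.1 p.2) + m j i = linkLd m :=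
    (Finset.sum_erase_add B (fun p => m p.1 p.2) hjiB).trans hc2
  rw [hAB] at h1
  omega

theorem lcNum_eq (m : Fin r → Fin r → ℕ) :
    lcNum m = ∑ p ∈ Finset.univ.filter (fun p : Fin r × Fin r => p.1 < p.2),
      (m p.1 p.2 + m p.2 p.1) := by
  unfold lcNum
  rw [← Finset.sum_filter_add_sum_filter_not
    (Finset.univ.filter (fun p : Fin r × Fin r => p.1 ≠ p.2))
    (fun p : Fin r × Fin r => p.1 < p.2)]
  rw [Finset.filter_filter, Finset.filter_filter]
  have e1 : (Finset.univ.filter fun p : Fin r × Fin r => p.1 ≠ p.2 ∧ p.1 < p.2)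
      = Finset.univ.filter (fun p : Fin r × Fin r => p.1 < p.2) := by
    apply Finset.filter_congr
    intro p _
    constructor
    · tauto
    · intro h; exact ⟨ne_of_lt h, h⟩
  have e2 : (Finset.univ.filter fun p : Fin r × Fin r => p.1 ≠ p.2 ∧ ¬ p.1 < p.2)
      = Finset.univ.filter (fun p : Fin r × Fin r => p.2 < p.1) := by
    apply Finset.filter_congr
    intro p _
    constructor
    · rintro ⟨hne, hnlt⟩
      rcases lt_or_gt_of_ne hne with h | h
      · exact absurd h hnlt
      · exact h
    · intro h
      exact ⟨ne_of_gt h, not_lt_of_gt h⟩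
  rw [e1, e2]
  rw [swap_sum (fun p : Fin r × Fin r => p.2 < p.1) m]
  have e3 : (Finset.univ.filter fun p : Fin r × Fin r =>
      (Prod.swap p).2 < (Prod.swap p).1) = Finset.univ.filter
      (fun p : Fin r × Fin r => p.1 < p.2) := by
    apply Finset.filter_congr
    intro p _
    simp
  rw [e3, ← Finset.sum_add_distrib]

end LinkAux

theorem linkWd_decomp {r : ℕ} {n : Fin r → ℕ} (W : ∀ i, List (Fin (n i) × Bool))
    (m : Fin r → Fin r → ℕ) :
    linkWd W m = (∑ i, wd (W i)) + linkLd m := by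
  apply le_antisymm
  · have hk : ∀ i, ∃ k : ℕ, wd (W i) = basedWd ((W i).rotate k) := by
      intro i
      have hne : {v | ∃ k : ℕ, v = basedWd ((W i).rotate k)}.Nonempty :=
        ⟨basedWd (W i), 0, by rw [List.rotate_zero]⟩
      exact Nat.sInf_mem hne
    choose k hkk using hk
    obtain ⟨σ0, hσ0⟩ := LinkAux.linkLd_mem m
    apply Nat.sInf_le
    refine ⟨σ0, k, ?_⟩
    rw [← hσ0]
    congr 1
    exact Finset.sum_congr rfl fun i _ => hkk i
  · apply le_csInf
    · exact ⟨_, 1, fun _ => 0, rfl⟩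
    · rintro v ⟨σ, k, rfl⟩
      apply add_le_add
      · apply Finset.sum_le_sum
        intro i _
        exact Nat.sInf_le ⟨k i, rfl⟩
      · exact LinkAux.linkLd_le m σ


/-- `d(D) + d(-D) + sr(D) ≤ c(D)`, with equality iff `D` has property C. -/
theorem warping_degree_sum_link (r : ℕ) (n : Fin r → ℕ)
    (W : ∀ i, List (Fin (n i) × Bool)) (m : Fin r → Fin r → ℕ)
    (hW : ∀ i, IsGaussWord (W i)) (hm : ∀ i, m i i = 0) :
    linkWd W m + linkWd (fun i => (W i).reverse) m + srNum n ≤ crossingNum n m ∧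
    (linkWd W m + linkWd (fun i => (W i).reverse) m + srNum n = crossingNum n m ↔
      PropertyC W m) := by
  have hd1 := linkWd_decomp W m
  have hd2 := linkWd_decomp (fun i => (W i).reverse) m
  have hcomp := fun i => GaussAux.comp_main (hW i)
  have hsr : srNum n = ∑ i, if 1 ≤ n i then 1 else 0 := Finset.card_filter _ _
  have hcross : crossingNum n m = (∑ i, n i) + lcNum m := by
    rw [crossingNum, LinkAux.lcNum_eq]
  have hsum : linkWd W m + linkWd (fun i => (W i).reverse) m + srNum n
      = (∑ i, (wd (W i) + wd ((W i).reverse) + if 1 ≤ n i then 1 else 0)) + 2 * linkLd m := by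
    rw [hd1, hd2, hsr, Finset.sum_add_distrib, Finset.sum_add_distrib]
    ring
  have hle : ∀ i : Fin r, (wd (W i) + wd ((W i).reverse) + if 1 ≤ n i then 1 else 0) ≤ n i :=
    fun i => (hcomp i).1
  have hsumle : (∑ i, (wd (W i) + wd ((W i).reverse) + if 1 ≤ n i then 1 else 0)) ≤ ∑ i, n i :=
    Finset.sum_le_sum (g := n) fun i _ => hle i
  have hlink := LinkAux.two_linkLd_le m
  have key : ∀ a b c d : ℕ, a + b = c + d → a ≤ c → b ≤ d → a = c ∧ b = d := by
    intros; omega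
  constructor
  · rw [hsum, hcross]
    exact add_le_add hsumle hlink
  · rw [hsum, hcross]
    constructor
    · intro heq
      obtain ⟨h1, h2⟩ := key _ _ _ _ heq hsumle hlink
      constructor
      · intro i
        have := (Finset.sum_eq_sum_iff_of_le (fun i _ => hle i)).1 h1 i (Finset.mem_univ i)
        exact (hcomp i).2.1 this
      · exact LinkAux.symm_of_link_eq h2
    · rintro ⟨hA, hsym⟩
      have h1 : ∀ i : Fin r, (wd (W i) + wd ((W i).reverse) + if 1 ≤ n i then 1 else 0) = n i :=
        fun i => (hcomp i).2.2 (hA i)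
      have h2 := LinkAux.link_eq_of_symm hsym
      rw [Finset.sum_congr rfl fun i _ => h1 i, h2]
end

section
/- Let W be the Gauss word of an oriented knot diagram with n crossings, where n ≥ 1. Then d(W) + d(-W) + 1 ≤ n. Moreover, equality holds if and only if W is alternating. -/
section Aux

lemma beq_prod_eq {n : ℕ} : (instBEqProd : BEq (Fin n × Bool)) = instBEqOfDecidableEq :=
  @lawful_beq_subsingleton _ _ _ Prod.instLawfulBEq instLawfulBEq

attribute [local instance high] instBEqOfDecidableEq

variable {n : ℕ}

lemma mem_of_count_one {α : Type*} [DecidableEq α] {l : List α} {a : α}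
    (h : l.count a = 1) : a ∈ l :=
  List.count_pos_iff.mp (by omega)

lemma count_cons_self' {α : Type*} [DecidableEq α] (a : α) (l : List α) :
    (a :: l).count a = l.count a + 1 :=
  List.count_cons_self

lemma count_cons_of_ne' {α : Type*} [DecidableEq α] {a b : α} (h : a ≠ b) (l : List α) :
    (b :: l).count a = l.count a :=
  List.count_cons_of_ne (Ne.symm h)

lemma count_pos_of_mem' {α : Type*} [DecidableEq α] {a : α} {l : List α} (h : a ∈ l) :
    0 < l.count a :=
  List.count_pos_iff.mpr h

lemma getElem_congr_idx' {α : Type*} (l : List α) {i j : ℕ} (h : i = j) (hi : i < l.length) :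
    l[i]'hi = l[j]'(h ▸ hi) := by subst h; rfl

lemma length_eq_sum_count' {α : Type*} [Fintype α] [DecidableEq α] (l : List α) :
    l.length = ∑ a, l.count a := by
  induction l with
  | nil => simp
  | cons x t ih =>
      simp only [List.count_cons, List.length_cons, Finset.sum_add_distrib, ← ih]
      simp [beq_iff_eq]

lemma gauss_length {W : List (Fin n × Bool)} (hW : IsGaussWord W) : W.length = 2 * n := by
  unfold IsGaussWord at hW
  rw [beq_prod_eq] at hW
  rw [length_eq_sum_count', Fintype.sum_prod_type]
  have h : ∀ i : Fin n, (∑ b : Bool, @List.count _ instBEqOfDecidableEq (i, b) W) = 2 := by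
    intro i
    rw [Fintype.sum_bool, (hW i).1, (hW i).2]
  simp only [h]
  simp [mul_comm]

lemma gauss_rotate {W : List (Fin n × Bool)} (hW : IsGaussWord W) (k : ℕ) :
    IsGaussWord (W.rotate k) := by
  unfold IsGaussWord at *
  rw [beq_prod_eq] at hW ⊢
  intro i
  exact ⟨((W.rotate_perm k).count_eq _).trans (hW i).1,
    ((W.rotate_perm k).count_eq _).trans (hW i).2⟩

lemma idxOf_reverse' {α : Type*} [DecidableEq α] {l : List α} {a : α}
    (h : l.count a = 1) : l.reverse.idxOf a = l.length - 1 - l.idxOf a := by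
  induction l with
  | nil => simp at h
  | cons x t ih =>
      by_cases hx : a = x
      · subst hx
        have ht : a ∉ t := by
          rw [List.count_cons_self] at h
          intro hm
          have := List.count_pos_iff.mpr hm
          omega
        rw [List.reverse_cons, List.idxOf_append_of_notMem (by simpa using ht),
          List.idxOf_cons_self]
        simp
      · have ht : t.count a = 1 := by
          rwa [List.count_cons_of_ne (Ne.symm hx)] at h
        have hmem : a ∈ t := List.count_pos_iff.mp (by omega)
        rw [List.reverse_cons, List.idxOf_append_of_mem (by simpa using hmem),
          List.idxOf_cons_ne _ (Ne.symm hx), ih ht]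
        have := List.idxOf_lt_length_iff.mpr hmem
        simp only [List.length_cons]
        omega

lemma basedWd_le {W : List (Fin n × Bool)} : basedWd W ≤ n := by
  unfold basedWd
  simpa using Finset.card_filter_le (Finset.univ : Finset (Fin n)) _

lemma basedWd_reverse {W : List (Fin n × Bool)} (hW : IsGaussWord W) :
    basedWd W + basedWd W.reverse = n := by
  unfold IsGaussWord at hW
  unfold basedWd
  rw [beq_prod_eq] at hW ⊢
  have key : ∀ i : Fin n,
      (@List.idxOf _ instBEqOfDecidableEq (i, false) W.reverse <
        @List.idxOf _ instBEqOfDecidableEq (i, true) W.reverse) ↔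
      ¬ (@List.idxOf _ instBEqOfDecidableEq (i, false) W <
        @List.idxOf _ instBEqOfDecidableEq (i, true) W) := by
    intro i
    have c1 := (hW i).1
    have c2 := (hW i).2
    have m1 : ((i, true) : Fin n × Bool) ∈ W := mem_of_count_one c1
    have m2 : ((i, false) : Fin n × Bool) ∈ W := mem_of_count_one c2
    have p1 := List.idxOf_lt_length_iff.mpr m1
    have p2 := List.idxOf_lt_length_iff.mpr m2
    have hne : @List.idxOf _ instBEqOfDecidableEq ((i, true) : Fin n × Bool) W ≠
        @List.idxOf _ instBEqOfDecidableEq ((i, false) : Fin n × Bool) W := by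
      intro hEq
      have g1 := List.getElem_idxOf p1
      have g2 := List.getElem_idxOf p2
      have g1' : W[@List.idxOf _ instBEqOfDecidableEq ((i, false) : Fin n × Bool) W]'(hEq ▸ p1)
          = (i, true) := (getElem_congr_idx' W hEq p1).symm.trans g1
      have : ((i, true) : Fin n × Bool) = (i, false) := g1'.symm.trans g2
      simp at this
    rw [idxOf_reverse' c1, idxOf_reverse' c2]
    omega
  have hsplit := Finset.card_filter_add_card_filter_not
      (s := (Finset.univ : Finset (Fin n)))
      (p := fun i => @List.idxOf _ instBEqOfDecidableEq (i, false) W <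
        @List.idxOf _ instBEqOfDecidableEq (i, true) W)
  have hrev : (Finset.univ.filter fun i : Fin n =>
      @List.idxOf _ instBEqOfDecidableEq (i, false) W.reverse <
        @List.idxOf _ instBEqOfDecidableEq (i, true) W.reverse)
      = (Finset.univ.filter fun i : Fin n =>
        ¬ (@List.idxOf _ instBEqOfDecidableEq (i, false) W <
          @List.idxOf _ instBEqOfDecidableEq (i, true) W)) := by
    ext i
    simp only [Finset.mem_filter, Finset.mem_univ, true_and]
    exact key i
  rw [hrev]
  simpa using hsplit

end Aux
section Aux2
variable {n : ℕ}

attribute [local instance high] instBEqOfDecidableEq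

lemma basedWd_cons_aux (c : Fin n) (b : Bool) (T : List (Fin n × Bool))
    (h : IsGaussWord ((c, b) :: T)) :
    (b = false → basedWd ((c, b) :: T) = basedWd (T ++ [(c, b)]) + 1) ∧
    (b = true → basedWd (T ++ [(c, b)]) = basedWd ((c, b) :: T) + 1) := by
  unfold IsGaussWord at h
  unfold basedWd
  rw [beq_prod_eq] at h ⊢
  have hcount : ∀ b' : Bool, @List.count _ instBEqOfDecidableEq ((c, b') : Fin n × Bool)
      ((c, b) :: T) = 1 := by
    intro b'; cases b'
    · exact (h c).2
    · exact (h c).1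
  have hnotT : ((c, b) : Fin n × Bool) ∉ T := by
    have h1 := hcount b
    rw [count_cons_self'] at h1
    intro hm
    have := count_pos_of_mem' hm
    omega
  have hbne : ((c, !b) : Fin n × Bool) ≠ (c, b) := by simp
  have hTnb : ((c, !b) : Fin n × Bool) ∈ T := by
    have h1 := hcount (!b)
    rw [count_cons_of_ne' hbne] at h1
    exact mem_of_count_one h1
  have hidxT : @List.idxOf _ instBEqOfDecidableEq ((c, !b) : Fin n × Bool) T < T.length :=
    List.idxOf_lt_length_iff.mpr hTnb
  have hother : ∀ (i : Fin n) (b' : Bool), i ≠ c → ((i, b') : Fin n × Bool) ∈ T := by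
    intro i b' hic
    have h1 : @List.count _ instBEqOfDecidableEq ((i, b') : Fin n × Bool) ((c, b) :: T) = 1 := by
      cases b'
      · exact (h i).2
      · exact (h i).1
    have hne : ((i, b') : Fin n × Bool) ≠ (c, b) := by simp [hic]
    rw [count_cons_of_ne' hne] at h1
    exact mem_of_count_one h1
  -- for i ≠ c the condition is preserved
  have hins : ∀ i : Fin n, i ≠ c →
      ((@List.idxOf _ instBEqOfDecidableEq ((i, false) : Fin n × Bool) ((c, b) :: T) <
        @List.idxOf _ instBEqOfDecidableEq ((i, true) : Fin n × Bool) ((c, b) :: T)) ↔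
       (@List.idxOf _ instBEqOfDecidableEq ((i, false) : Fin n × Bool) (T ++ [(c, b)]) <
        @List.idxOf _ instBEqOfDecidableEq ((i, true) : Fin n × Bool) (T ++ [(c, b)]))) := by
    intro i hic
    have hne : ∀ b' : Bool, ((c, b) : Fin n × Bool) ≠ (i, b') := fun b' => by simp [Ne.symm hic]
    rw [List.idxOf_cons_ne _ (hne false), List.idxOf_cons_ne _ (hne true),
      List.idxOf_append_of_mem (hother i false hic),
      List.idxOf_append_of_mem (hother i true hic)]
    exact Nat.succ_lt_succ_iff
  -- condition at c for the cons word
  have hAc : (@List.idxOf _ instBEqOfDecidableEq ((c, false) : Fin n × Bool) ((c, b) :: T) <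
      @List.idxOf _ instBEqOfDecidableEq ((c, true) : Fin n × Bool) ((c, b) :: T)) ↔
      b = false := by
    cases b
    · rw [List.idxOf_cons_self,
        List.idxOf_cons_ne _ (show ((c, false) : Fin n × Bool) ≠ (c, true) by simp)]
      simp
    · rw [List.idxOf_cons_self,
        List.idxOf_cons_ne _ (show ((c, true) : Fin n × Bool) ≠ (c, false) by simp)]
      simp
  -- condition at c for the appended word
  have e1 : @List.idxOf _ instBEqOfDecidableEq ((c, b) : Fin n × Bool) (T ++ [(c, b)])
      = T.length := by
    rw [List.idxOf_append_of_notMem hnotT, List.idxOf_cons_self]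
    omega
  have e2 : @List.idxOf _ instBEqOfDecidableEq ((c, !b) : Fin n × Bool) (T ++ [(c, b)])
      = @List.idxOf _ instBEqOfDecidableEq ((c, !b) : Fin n × Bool) T :=
    List.idxOf_append_of_mem hTnb
  have hBc : (@List.idxOf _ instBEqOfDecidableEq ((c, false) : Fin n × Bool) (T ++ [(c, b)]) <
      @List.idxOf _ instBEqOfDecidableEq ((c, true) : Fin n × Bool) (T ++ [(c, b)])) ↔
      b = true := by
    cases b
    · simp only [Bool.not_false] at e2 hidxT
      rw [e1, e2]
      exact iff_of_false (by omega) (by simp)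
    · simp only [Bool.not_true] at e2 hidxT
      rw [e1, e2]
      exact iff_of_true (by omega) rfl
  constructor
  · rintro rfl
    have hA : (Finset.univ.filter fun i : Fin n =>
        @List.idxOf _ instBEqOfDecidableEq ((i, false) : Fin n × Bool) ((c, false) :: T) <
        @List.idxOf _ instBEqOfDecidableEq ((i, true) : Fin n × Bool) ((c, false) :: T))
        = insert c (Finset.univ.filter fun i : Fin n =>
          @List.idxOf _ instBEqOfDecidableEq ((i, false) : Fin n × Bool) (T ++ [(c, false)]) <
          @List.idxOf _ instBEqOfDecidableEq ((i, true) : Fin n × Bool) (T ++ [(c, false)])) := by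
      ext i
      by_cases hic : i = c
      · subst hic
        simp only [Finset.mem_filter, Finset.mem_univ, true_and, Finset.mem_insert, true_or,
          iff_true]
        exact hAc.mpr rfl
      · simp only [Finset.mem_filter, Finset.mem_univ, true_and, Finset.mem_insert, hic,
          false_or]
        exact hins i hic
    have hcB : c ∉ (Finset.univ.filter fun i : Fin n =>
        @List.idxOf _ instBEqOfDecidableEq ((i, false) : Fin n × Bool) (T ++ [(c, false)]) <
        @List.idxOf _ instBEqOfDecidableEq ((i, true) : Fin n × Bool) (T ++ [(c, false)])) := by
      simp only [Finset.mem_filter, Finset.mem_univ, true_and]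
      intro hlt
      exact absurd (hBc.mp hlt) (by simp)
    rw [hA, Finset.card_insert_of_notMem hcB]
  · rintro rfl
    have hB : (Finset.univ.filter fun i : Fin n =>
        @List.idxOf _ instBEqOfDecidableEq ((i, false) : Fin n × Bool) (T ++ [(c, true)]) <
        @List.idxOf _ instBEqOfDecidableEq ((i, true) : Fin n × Bool) (T ++ [(c, true)]))
        = insert c (Finset.univ.filter fun i : Fin n =>
          @List.idxOf _ instBEqOfDecidableEq ((i, false) : Fin n × Bool) ((c, true) :: T) <
          @List.idxOf _ instBEqOfDecidableEq ((i, true) : Fin n × Bool) ((c, true) :: T)) := by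
      ext i
      by_cases hic : i = c
      · subst hic
        simp only [Finset.mem_filter, Finset.mem_univ, true_and, Finset.mem_insert, true_or,
          iff_true]
        exact hBc.mpr rfl
      · simp only [Finset.mem_filter, Finset.mem_univ, true_and, Finset.mem_insert, hic,
          false_or]
        exact (hins i hic).symm
    have hcA : c ∉ (Finset.univ.filter fun i : Fin n =>
        @List.idxOf _ instBEqOfDecidableEq ((i, false) : Fin n × Bool) ((c, true) :: T) <
        @List.idxOf _ instBEqOfDecidableEq ((i, true) : Fin n × Bool) ((c, true) :: T)) := by
      simp only [Finset.mem_filter, Finset.mem_univ, true_and]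
      intro hlt
      exact absurd (hAc.mp hlt) (by simp)
    rw [hB, Finset.card_insert_of_notMem hcA]

lemma step {W : List (Fin n × Bool)} (hW : IsGaussWord W) (hpos : 0 < W.length) (k : ℕ)
    (hk : k % W.length < W.length) :
    ((W[k % W.length]'hk).2 = true →
      basedWd (W.rotate (k + 1)) = basedWd (W.rotate k) + 1) ∧
    ((W[k % W.length]'hk).2 = false →
      basedWd (W.rotate k) = basedWd (W.rotate (k + 1)) + 1) := by
  have hVne : W.rotate k ≠ [] := by
    intro hnil
    have := W.length_rotate k
    rw [hnil] at this
    simp at this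
    omega
  obtain ⟨x, T, hxT⟩ := List.exists_cons_of_ne_nil hVne
  have hG : IsGaussWord ((x.1, x.2) :: T) := by
    rw [Prod.mk.eta, ← hxT]; exact gauss_rotate hW k
  have haux := basedWd_cons_aux x.1 x.2 T hG
  have hrot1 : W.rotate (k + 1) = T ++ [x] := by
    rw [← W.rotate_rotate k 1, hxT, List.rotate_cons_succ, List.rotate_zero]
  have hhead : W[k % W.length]'hk = x := by
    have h0 : 0 < (W.rotate k).length := by rw [W.length_rotate]; exact hpos
    have h1 := List.getElem_rotate W k 0 h0
    have h2 : (W.rotate k)[0]'h0 = x := by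
      rw [List.getElem_of_eq hxT h0]
      exact List.getElem_cons_zero _ _ _
    exact (getElem_congr_idx' W
      (show k % W.length = (0 + k) % W.length by rw [Nat.zero_add]) hk).trans
      (h1.symm.trans h2)
  rw [Prod.mk.eta] at haux
  rw [hrot1, hhead, hxT]
  exact ⟨fun hb => (haux.2 hb).symm ▸ rfl, fun hb => (haux.1 hb)⟩

end Aux2
section Aux3
variable {n : ℕ}

lemma alt_parity {W : List (Fin n × Bool)} (hA : IsAlternating W) :
    ∀ j (hj : j < W.length) (h0 : 0 < W.length),
      (W[j]'hj).2 = if j % 2 = 0 then (W[0]'h0).2 else !(W[0]'h0).2 := by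
  intro j
  induction j with
  | zero => intro hj h0; simp
  | succ j ih =>
      intro hj h0
      have hstep : (W[j + 1]'hj).2 = !(W[j]'(by omega)).2 := by
        have := List.isChain_iff_getElem.mp hA j (by omega)
        simpa [List.get_eq_getElem] using this
      rw [hstep, ih (by omega) h0]
      rcases Nat.mod_two_eq_zero_or_one j with hp | hp
      · have h2 : (j + 1) % 2 = 1 := by omega
        simp [hp, h2]
      · have h2 : (j + 1) % 2 = 0 := by omega
        simp [hp, h2]

lemma alt_flag_succ {W : List (Fin n × Bool)} (hA : IsAlternating W)
    (hlen : W.length = 2 * n) (hn : 1 ≤ n) (k : ℕ)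
    (h1 : (k + 1) % W.length < W.length) (h2 : k % W.length < W.length) :
    (W[(k + 1) % W.length]'h1).2 = !(W[k % W.length]'h2).2 := by
  have hL : 2 ≤ W.length := by omega
  have hmod : (k + 1) % W.length = (k % W.length + 1) % W.length := by
    conv_lhs => rw [Nat.add_mod]
    rw [Nat.mod_eq_of_lt (show 1 < W.length by omega)]
  by_cases hc : k % W.length + 1 < W.length
  · have hidx : (k + 1) % W.length = k % W.length + 1 := by
      rw [hmod, Nat.mod_eq_of_lt hc]
    rw [getElem_congr_idx' W hidx h1]
    have := List.isChain_iff_getElem.mp hA (k % W.length) (by omega)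
    simpa [List.get_eq_getElem] using this
  · have hke : k % W.length = W.length - 1 := by omega
    have hidx : (k + 1) % W.length = 0 := by
      rw [hmod, hke]
      have : W.length - 1 + 1 = W.length := by omega
      rw [this, Nat.mod_self]
    rw [getElem_congr_idx' W hidx h1, getElem_congr_idx' W hke h2]
    have hlast := alt_parity hA (W.length - 1) (by omega) (by omega)
    have hodd : (W.length - 1) % 2 = 1 := by omega
    rw [hlast]
    simp [hodd]

lemma alt_period2 {W : List (Fin n × Bool)} (hW : IsGaussWord W) (hA : IsAlternating W)
    (hlen : W.length = 2 * n) (hn : 1 ≤ n) (k : ℕ) :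
    basedWd (W.rotate (k + 2)) = basedWd (W.rotate k) := by
  have hadd : k + 2 = k + 1 + 1 := rfl
  rw [hadd]
  have hpos : 0 < W.length := by omega
  have hk1 : k % W.length < W.length := Nat.mod_lt _ hpos
  have hk2 : (k + 1) % W.length < W.length := Nat.mod_lt _ hpos
  have h1 := step hW hpos k hk1
  have h2 := step hW hpos (k + 1) hk2
  have hf := alt_flag_succ hA hlen hn k hk2 hk1
  cases hb : (W[k % W.length]'hk1).2
  · rw [hb] at hf
    have e1 := h1.2 hb
    have e2 := h2.1 (by rw [hf]; rfl)
    omega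
  · rw [hb] at hf
    have e1 := h1.1 hb
    have e2 := h2.2 (by rw [hf]; rfl)
    omega

lemma alt_mod2 {W : List (Fin n × Bool)} (hW : IsGaussWord W) (hA : IsAlternating W)
    (hlen : W.length = 2 * n) (hn : 1 ≤ n) (k : ℕ) :
    basedWd (W.rotate k) = basedWd (W.rotate (k % 2)) := by
  induction k using Nat.twoStepInduction with
  | zero => rfl
  | one => rfl
  | more k ih _ =>
      show basedWd (W.rotate (k + 2)) = basedWd (W.rotate ((k + 2) % 2))
      rw [alt_period2 hW hA hlen hn k, ih, show (k + 2) % 2 = k % 2 by omega]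

end Aux3
/-- for a knot diagram with `n ≥ 1` crossings,
`d(W) + d(-W) + 1 ≤ n`, with equality iff `W` is alternating. -/
theorem warping_degree_sum_knot (n : ℕ) (hn : 1 ≤ n)
    (W : List (Fin n × Bool)) (hW : IsGaussWord W) :
    wd W + wd W.reverse + 1 ≤ n ∧
    (wd W + wd W.reverse + 1 = n ↔ IsAlternating W) := by
  have hlen : W.length = 2 * n := gauss_length hW
  have hpos : 0 < W.length := by omega
  have hf_le : ∀ k, wd W ≤ basedWd (W.rotate k) := fun k => Nat.sInf_le ⟨k, rfl⟩
  have hfb_le : ∀ k, basedWd (W.rotate k) ≤ n := fun _ => basedWd_le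
  have hREV : ∀ m, wd W.reverse + basedWd (W.rotate m) ≤ n := by
    intro m
    have hb := basedWd_reverse (gauss_rotate hW m)
    have hr : (W.rotate m).reverse = W.reverse.rotate (W.length - m % W.length) :=
      W.reverse_rotate m
    have hle : wd W.reverse ≤ basedWd ((W.rotate m).reverse) := by
      rw [hr]; exact Nat.sInf_le ⟨_, rfl⟩
    omega
  obtain ⟨k0, hk0⟩ : ∃ k, wd W = basedWd (W.rotate k) :=
    Nat.sInf_mem (s := {v | ∃ k, v = basedWd (W.rotate k)})
      ⟨basedWd W, 0, by rw [List.rotate_zero]⟩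
  have hineq : wd W + wd W.reverse + 1 ≤ n := by
    have hk : k0 % W.length < W.length := Nat.mod_lt _ hpos
    have hs := step hW hpos k0 hk
    cases hb : (W[k0 % W.length]'hk).2
    · have h1 := hs.2 hb
      have h2 := hf_le (k0 + 1)
      omega
    · have h1 := hs.1 hb
      have h2 := hREV (k0 + 1)
      omega
  refine ⟨hineq, ?_, ?_⟩
  · -- equality → alternating
    intro heq
    by_contra hAn
    unfold IsAlternating at hAn
    rw [List.Chain', List.isChain_iff_getElem] at hAn
    push_neg at hAn
    obtain ⟨i, hi, hne⟩ := hAn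
    have hilt : i < W.length := by omega
    have hi1lt : i + 1 < W.length := by omega
    have hflag : (W[i + 1]'hi1lt).2 = (W[i]'hilt).2 := by
      cases h1 : (W[i + 1]'hi1lt).2 <;> cases h2 : (W[i]'hilt).2 <;> simp_all
    have hk1 : i % W.length < W.length := Nat.mod_lt _ hpos
    have hk2 : (i + 1) % W.length < W.length := Nat.mod_lt _ hpos
    have hmi : i % W.length = i := Nat.mod_eq_of_lt hilt
    have hmi1 : (i + 1) % W.length = i + 1 := Nat.mod_eq_of_lt hi1lt
    have hs1 := step hW hpos i hk1
    have hs2 := step hW hpos (i + 1) hk2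
    have hg1 : W[i % W.length]'hk1 = W[i]'hilt := getElem_congr_idx' W hmi hk1
    have hg2 : W[(i + 1) % W.length]'hk2 = W[i + 1]'hi1lt := getElem_congr_idx' W hmi1 hk2
    cases hb : (W[i]'hilt).2
    · have e1 := hs1.2 (by rw [hg1, hb])
      have e2 := hs2.2 (by rw [hg2, hflag, hb])
      have h3 := hf_le (i + 1 + 1)
      have h4 := hREV i
      omega
    · have e1 := hs1.1 (by rw [hg1, hb])
      have e2 := hs2.1 (by rw [hg2, hflag, hb])
      have h3 := hf_le i
      have h4 := hREV (i + 1 + 1)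
      omega
  · -- alternating → equality
    intro hA
    have hset0 := alt_mod2 hW hA hlen hn k0
    obtain ⟨k1, hk1⟩ : ∃ k, wd W.reverse = basedWd (W.reverse.rotate k) :=
      Nat.sInf_mem (s := {v | ∃ k, v = basedWd (W.reverse.rotate k)})
        ⟨basedWd W.reverse, 0, by rw [List.rotate_zero]⟩
    set m1 : ℕ := W.length - k1 % W.length with hm1def
    have hrot : W.reverse.rotate k1 = (W.rotate m1).reverse := List.rotate_reverse W k1
    have hb1 := basedWd_reverse (gauss_rotate hW m1)
    have e1 : wd W.reverse + basedWd (W.rotate m1) = n := by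
      rw [hk1, hrot]; omega
    have hset1 := alt_mod2 hW hA hlen hn m1
    have hrel : basedWd (W.rotate 0) = basedWd (W.rotate 1) + 1 ∨
        basedWd (W.rotate 1) = basedWd (W.rotate 0) + 1 := by
      have hk : (0 : ℕ) % W.length < W.length := Nat.mod_lt _ hpos
      have hg0 : W[(0 : ℕ) % W.length]'hk = W[0]'hpos :=
        getElem_congr_idx' W (Nat.zero_mod _) hk
      have hs0 := step hW hpos 0 hk
      simp only [Nat.zero_add] at hs0
      cases hb : (W[0]'hpos).2
      · exact Or.inl (hs0.2 (by rw [hg0, hb]))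
      · exact Or.inr (hs0.1 (by rw [hg0, hb]))
    have hge : n ≤ wd W + wd W.reverse + 1 := by
      rcases Nat.mod_two_eq_zero_or_one k0 with h0p | h0p <;>
        rw [h0p] at hset0 <;>
        rcases Nat.mod_two_eq_zero_or_one m1 with h1p | h1p <;>
        rw [h1p] at hset1 <;>
        rcases hrel with hr | hr <;>
        omega
    omega
end

section
/- The linking warping degree satisfies 2·ld ≤ lc. Moreover, equality holds if and only if m i j = m j i for all i ≠ j (i.e., for every pair of components, the number of over-crossings of one component over the other equals the number of its under-crossings). -/
section Aux
variable {r : ℕ}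

lemma ldSigma_eq_sum (m : Fin r → Fin r → ℕ) (σ : Equiv.Perm (Fin r)) :
    ldSigma m σ = ∑ p : Fin r × Fin r, if σ p.1 < σ p.2 then m p.1 p.2 else 0 :=
  Finset.sum_filter _ _

lemma lcNum_eq_sum (m : Fin r → Fin r → ℕ) :
    lcNum m = ∑ p : Fin r × Fin r, if p.1 ≠ p.2 then m p.1 p.2 else 0 :=
  Finset.sum_filter _ _

lemma key_rev (m : Fin r → Fin r → ℕ) (hm : ∀ i, m i i = 0) (σ : Equiv.Perm (Fin r)) :
    ldSigma m σ + ldSigma m (σ.trans Fin.revPerm) = lcNum m := by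
  rw [ldSigma_eq_sum, ldSigma_eq_sum, lcNum_eq_sum, ← Finset.sum_add_distrib]
  refine Finset.sum_congr rfl fun p _ => ?_
  simp only [Equiv.trans_apply, Fin.revPerm_apply, Fin.rev_lt_rev]
  rcases lt_trichotomy (σ p.1) (σ p.2) with h|h|h
  · have hne : p.1 ≠ p.2 := fun e => absurd h (by rw [e]; exact lt_irrefl _)
    simp [h, not_lt_of_gt h, hne]
  · have he : p.1 = p.2 := σ.injective h
    simp [h, he, hm]
  · have hne : p.1 ≠ p.2 := fun e => absurd h (by rw [e]; exact lt_irrefl _)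
    simp [h, not_lt_of_gt h, hne]

lemma linkLd_le (m : Fin r → Fin r → ℕ) (σ : Equiv.Perm (Fin r)) :
    linkLd m ≤ ldSigma m σ :=
  Nat.sInf_le ⟨σ, rfl⟩

lemma linkLd_exists (m : Fin r → Fin r → ℕ) :
    ∃ σ : Equiv.Perm (Fin r), linkLd m = ldSigma m σ := by
  have hne : {v | ∃ σ : Equiv.Perm (Fin r), v = ldSigma m σ}.Nonempty := ⟨ldSigma m 1, 1, rfl⟩
  exact Nat.sInf_mem hne

lemma swap01_lt (hr : 2 ≤ r) [NeZero r] (x y : Fin r)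
    (h1 : ¬(x = 0 ∧ y = 1)) (h2 : ¬(x = 1 ∧ y = 0)) :
    Equiv.swap 0 1 x < Equiv.swap 0 1 y ↔ x < y := by
  have hv1 : (1 : Fin r).val = 1 := by
    rw [Fin.val_one']; exact Nat.mod_eq_of_lt (by omega)
  have hval : ∀ z : Fin r, (Equiv.swap 0 1 z).val =
      if z.val = 0 then 1 else if z.val = 1 then 0 else z.val := by
    intro z
    rcases eq_or_ne z 0 with hz | hz
    · subst hz; rw [Equiv.swap_apply_left, if_pos (Fin.val_zero r)]; exact hv1
    rcases eq_or_ne z 1 with hz1 | hz1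
    · subst hz1
      rw [Equiv.swap_apply_right, if_neg (by rw [hv1]; exact one_ne_zero), if_pos hv1]
      exact Fin.val_zero r
    · rw [Equiv.swap_apply_of_ne_of_ne hz hz1]
      have e0 : z.val ≠ 0 := fun h => hz (Fin.ext h)
      have e1 : z.val ≠ 1 := fun h => hz1 (Fin.ext (by rw [hv1]; exact h))
      simp [e0, e1]
  have hx1 : ¬(x.val = 0 ∧ y.val = 1) := fun ⟨a, b⟩ =>
    h1 ⟨Fin.ext a, Fin.ext (by rw [hv1]; exact b)⟩
  have hx2 : ¬(x.val = 1 ∧ y.val = 0) := fun ⟨a, b⟩ =>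
    h2 ⟨Fin.ext (by rw [hv1]; exact a), Fin.ext b⟩
  rw [Fin.lt_def, Fin.lt_def, hval, hval]
  have := x.isLt; have := y.isLt
  split_ifs <;> omega

end Aux
/-- `2·ld ≤ lc`, with equality iff `m i j = m j i` for all `i ≠ j`. -/
theorem two_ld_le_lc (r : ℕ) (m : Fin r → Fin r → ℕ) (hm : ∀ i, m i i = 0) :
    2 * linkLd m ≤ lcNum m ∧
    (2 * linkLd m = lcNum m ↔ ∀ i j : Fin r, i ≠ j → m i j = m j i) := by
  have hle : 2 * linkLd m ≤ lcNum m := by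
    rw [← key_rev m hm 1, two_mul]
    exact Nat.add_le_add (linkLd_le m _) (linkLd_le m _)
  refine ⟨hle, ?_, ?_⟩
  · -- equality → symmetric
    intro heq i j hij
    have hall : ∀ σ : Equiv.Perm (Fin r), ldSigma m σ = linkLd m := by
      intro σ
      have h1 := linkLd_le m σ
      have h2 := linkLd_le m (σ.trans Fin.revPerm)
      have h3 := key_rev m hm σ
      omega
    have hr : 2 ≤ r := by
      have h1 := i.isLt; have h2 := j.isLt
      have h3 : i.val ≠ j.val := fun e => hij (Fin.ext e)
      omega
    haveI : NeZero r := ⟨by omega⟩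
    have hv1 : (1 : Fin r).val = 1 := by
      rw [Fin.val_one']; exact Nat.mod_eq_of_lt (by omega)
    have h01 : (0 : Fin r) ≠ 1 := by
      intro h; have := congrArg Fin.val h; rw [hv1] at this; exact absurd this (by simp)
    have hlt01 : (0 : Fin r) < 1 := by rw [Fin.lt_def, hv1]; exact Nat.zero_lt_one
    have hn10 : ¬ ((1 : Fin r) < 0) := by rw [Fin.lt_def, hv1]; omega
    -- build σ with σ i = 0, σ j = 1
    set a : Equiv.Perm (Fin r) := Equiv.swap 0 i with ha
    have hai : a i = 0 := Equiv.swap_apply_right 0 i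
    have haj0 : a j ≠ 0 := fun h => hij (a.injective (h.trans hai.symm)).symm
    set b : Equiv.Perm (Fin r) := Equiv.swap 1 (a j) with hb
    set σ : Equiv.Perm (Fin r) := a.trans b with hσ
    have hσi : σ i = 0 := by
      simp only [hσ, Equiv.trans_apply, hai, hb]
      exact Equiv.swap_apply_of_ne_of_ne h01 (Ne.symm haj0)
    have hσj : σ j = 1 := by
      simp only [hσ, Equiv.trans_apply, hb]
      exact Equiv.swap_apply_right 1 (a j)
    set τ : Equiv.Perm (Fin r) := σ.trans (Equiv.swap 0 1) with hτ
    have hτi : τ i = 1 := by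
      simp only [hτ, Equiv.trans_apply, hσi, Equiv.swap_apply_left]
    have hτj : τ j = 0 := by
      simp only [hτ, Equiv.trans_apply, hσj, Equiv.swap_apply_right]
    -- main sum identity
    have hsum : ldSigma m τ + m i j = ldSigma m σ + m j i := by
      rw [ldSigma_eq_sum, ldSigma_eq_sum]
      have e1 : m i j = ∑ p : Fin r × Fin r, if p = (i, j) then m i j else 0 := by
        rw [Finset.sum_ite_eq' Finset.univ (i, j) (fun _ => m i j)]; simp
      have e2 : m j i = ∑ p : Fin r × Fin r, if p = (j, i) then m j i else 0 := by
        rw [Finset.sum_ite_eq' Finset.univ (j, i) (fun _ => m j i)]; simp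
      rw [e1, e2, ← Finset.sum_add_distrib, ← Finset.sum_add_distrib]
      refine Finset.sum_congr rfl fun p _ => ?_
      by_cases hp1 : p = (i, j)
      · subst hp1
        have g1 : ¬ τ i < τ j := by rw [hτi, hτj]; exact hn10
        have g2 : σ i < σ j := by rw [hσi, hσj]; exact hlt01
        have g3 : ((i, j) : Fin r × Fin r) ≠ (j, i) := fun h => hij (congrArg Prod.fst h)
        rw [if_neg g1, if_pos rfl, if_pos g2, if_neg g3]
        simp
      · by_cases hp2 : p = (j, i)
        · subst hp2
          have g1 : τ j < τ i := by rw [hτi, hτj]; exact hlt01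
          have g2 : ¬ σ j < σ i := by rw [hσi, hσj]; exact hn10
          rw [if_pos g1, if_neg hp1, if_neg g2, if_pos rfl]
          simp
        · have hc1 : ¬(σ p.1 = 0 ∧ σ p.2 = 1) := by
            rintro ⟨u1, u2⟩
            exact hp1 (Prod.ext (σ.injective (u1.trans hσi.symm)) (σ.injective (u2.trans hσj.symm)))
          have hc2 : ¬(σ p.1 = 1 ∧ σ p.2 = 0) := by
            rintro ⟨u1, u2⟩
            exact hp2 (Prod.ext (σ.injective (u1.trans hσj.symm)) (σ.injective (u2.trans hσi.symm)))
          have hiff := swap01_lt hr (σ p.1) (σ p.2) hc1 hc2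
          simp only [hτ, Equiv.trans_apply, hiff, hp1, hp2, if_false]
    have h1 := hall σ
    have h2 := hall τ
    omega
  · -- symmetric → equality
    intro hsym
    obtain ⟨σ₀, hσ₀⟩ := linkLd_exists m
    have hrev : ldSigma m (σ₀.trans Fin.revPerm) = ldSigma m σ₀ := by
      rw [ldSigma_eq_sum, ldSigma_eq_sum]
      refine Fintype.sum_equiv (Equiv.prodComm _ _) _ _ fun p => ?_
      simp only [Equiv.prodComm_apply, Prod.fst_swap, Prod.snd_swap, Equiv.trans_apply,
        Fin.revPerm_apply, Fin.rev_lt_rev]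
      by_cases h : σ₀ p.2 < σ₀ p.1
      · have hne : p.1 ≠ p.2 := fun e => absurd h (by rw [e]; exact lt_irrefl _)
        rw [if_pos h]; simp only [h, if_true]; exact hsym _ _ hne
      · rw [if_neg h]; simp [h]
    have hk := key_rev m hm σ₀
    omega
end

section
/- Let D be a self-crossing diagram of an r-component link, i.e., n i ≥ 1 for every i : Fin r. Then d(D) + d(-D) + r ≤ c(D). Moreover, equality holds if and only if D has property C. -/
namespace LinkProof

variable {n : ℕ} {W : List (Fin n × Bool)}

lemma beq_eq : (instBEqProd : BEq (Fin n × Bool)) = instBEqOfDecidableEq :=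
  @lawful_beq_subsingleton (Fin n × Bool) _ _ inferInstance (@instLawfulBEq (Fin n × Bool) _)

lemma count_cast (a : Fin n × Bool) (l : List (Fin n × Bool)) :
    @List.count _ instBEqProd a l = @List.count _ instBEqOfDecidableEq a l :=
  congrArg (fun inst : BEq (Fin n × Bool) => @List.count _ inst a l) beq_eq

lemma indexOf_cast (a : Fin n × Bool) (l : List (Fin n × Bool)) :
    @List.idxOf _ instBEqProd a l = @List.idxOf _ instBEqOfDecidableEq a l :=
  congrArg (fun inst : BEq (Fin n × Bool) => @List.idxOf _ inst a l) beq_eq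

lemma gw_count (hW : IsGaussWord W) (a : Fin n × Bool) : W.count a = 1 := by
  obtain ⟨i, b⟩ := a; cases b
  · exact (hW i).2
  · exact (hW i).1

lemma gw_mem (hW : IsGaussWord W) (a : Fin n × Bool) : a ∈ W := by
  have h := gw_count hW a
  exact (List.count_pos_iff (a := a) (l := W)).mp (by omega)

lemma gw_nodup (hW : IsGaussWord W) : W.Nodup :=
  List.nodup_iff_count_le_one.2 fun a => by exact (gw_count hW a).le

lemma gw_length (hW : IsGaussWord W) : W.length = 2 * n := by
  have h : ∑ a : Fin n × Bool, (W : Multiset (Fin n × Bool)).count a = Multiset.card (W : Multiset (Fin n × Bool)) :=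
    Multiset.sum_count_eq_card (fun a _ => Finset.mem_univ a)
  simp only [Multiset.coe_count, Multiset.coe_card] at h
  rw [← h]
  have h2 : ∀ a : Fin n × Bool, @List.count _ instBEqOfDecidableEq a W = 1 := by
    intro a; rw [← count_cast]; exact gw_count hW a
  rw [Finset.sum_congr rfl fun a _ => h2 a, Finset.sum_const, smul_eq_mul,
    mul_one, Finset.card_univ, Fintype.card_prod, Fintype.card_fin, Fintype.card_bool, mul_comm]

lemma gw_rotate (hW : IsGaussWord W) (k : ℕ) : IsGaussWord (W.rotate k) := by
  intro i
  have h := hW i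
  rw [count_cast] at h ⊢
  rw [count_cast (i, false)] at h ⊢
  constructor <;> rw [@List.Perm.count_eq _ instBEqOfDecidableEq _ _ (W.rotate_perm k)]
  · exact h.1
  · exact h.2

lemma gw_reverse (hW : IsGaussWord W) : IsGaussWord W.reverse := by
  intro i
  simp only [List.count_reverse]
  exact hW i


section Words

variable {n : ℕ}

local notation "idx" => @List.idxOf (Fin n × Bool) instBEqProd

def bwd (W : List (Fin n × Bool)) : ℕ :=
  (Finset.univ.filter fun i : Fin n => idx (i, false) W < idx (i, true) W).card

lemma basedWd_eq (W : List (Fin n × Bool)) : basedWd W = bwd W := by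
  simp only [basedWd, bwd, indexOf_cast]

lemma bwd_le (W : List (Fin n × Bool)) : bwd W ≤ n := by
  classical
  calc (Finset.univ.filter fun i : Fin n => idx (i, false) W < idx (i, true) W).card
      ≤ (Finset.univ : Finset (Fin n)).card := Finset.card_filter_le _ _
    _ = n := by simp

lemma mem_tail_of_ne {p : Fin n} {b : Bool} {T : List (Fin n × Bool)}
    (h : IsGaussWord ((p, b) :: T)) {i : Fin n} (hip : i ≠ p) (c : Bool) : (i, c) ∈ T := by
  have hm := gw_mem h (i, c)
  simp only [List.mem_cons] at hm
  rcases hm with h1 | h1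
  · exact absurd (congrArg Prod.fst h1) (by simpa using hip)
  · exact h1

lemma mem_tail_flag {p : Fin n} {b : Bool} {T : List (Fin n × Bool)}
    (h : IsGaussWord ((p, b) :: T)) : (p, !b) ∈ T := by
  have hm := gw_mem h (p, !b)
  simp only [List.mem_cons] at hm
  rcases hm with h1 | h1
  · have : (!b) = b := congrArg Prod.snd h1
    simp at this
  · exact h1

lemma head_notmem_tail {p : Fin n} {b : Bool} {T : List (Fin n × Bool)}
    (h : IsGaussWord ((p, b) :: T)) : (p, b) ∉ T :=
  (List.nodup_cons.mp (gw_nodup h)).1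

lemma hiff_of_ne {p : Fin n} {b : Bool} {T : List (Fin n × Bool)}
    (h : IsGaussWord ((p, b) :: T)) {i : Fin n} (hip : i ≠ p) :
    (idx (i,false) (T ++ [(p,b)]) < idx (i,true) (T ++ [(p,b)]) ↔
     idx (i,false) ((p,b)::T) < idx (i,true) ((p,b)::T)) := by
  have hne : ∀ c : Bool, (p, b) ≠ (i, c) := fun c hq => hip (congrArg Prod.fst hq).symm
  rw [List.idxOf_append_of_mem (mem_tail_of_ne h hip false),
      List.idxOf_append_of_mem (mem_tail_of_ne h hip true),
      List.idxOf_cons_ne _ (hne false), List.idxOf_cons_ne _ (hne true)]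
  omega

lemma bwd_step_true {p : Fin n} {T : List (Fin n × Bool)}
    (h : IsGaussWord ((p, true) :: T)) :
    bwd (T ++ [(p, true)]) = bwd ((p, true) :: T) + 1 := by
  classical
  have hf : (p, false) ∈ T := by simpa using mem_tail_flag h
  have hnt : (p, true) ∉ T := head_notmem_tail h
  have hpnot : ¬ (idx (p,false) ((p,true)::T) < idx (p,true) ((p,true)::T)) := by
    rw [List.idxOf_cons_self]; omega
  have hpyes : idx (p,false) (T ++ [(p,true)]) < idx (p,true) (T ++ [(p,true)]) := by
    rw [List.idxOf_append_of_mem hf, List.idxOf_append_of_notMem hnt,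
      List.idxOf_cons_self]
    simpa using List.idxOf_lt_length_iff.mpr hf
  have hset : (Finset.univ.filter fun i : Fin n =>
        idx (i,false) (T++[(p,true)]) < idx (i,true) (T++[(p,true)]))
      = insert p (Finset.univ.filter fun i : Fin n =>
        idx (i,false) ((p,true)::T) < idx (i,true) ((p,true)::T)) := by
    ext i
    simp only [Finset.mem_insert, Finset.mem_filter, Finset.mem_univ, true_and]
    by_cases hip : i = p
    · subst hip; simp [hpyes]
    · simp only [hip, false_or]
      exact hiff_of_ne h hip
  show _ = _
  rw [bwd, bwd, hset, Finset.card_insert_of_notMem (by simp [hpnot])]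

lemma bwd_step_false {p : Fin n} {T : List (Fin n × Bool)}
    (h : IsGaussWord ((p, false) :: T)) :
    bwd ((p, false) :: T) = bwd (T ++ [(p, false)]) + 1 := by
  classical
  have ht : (p, true) ∈ T := by simpa using mem_tail_flag h
  have hnf : (p, false) ∉ T := head_notmem_tail h
  have hpyes : idx (p,false) ((p,false)::T) < idx (p,true) ((p,false)::T) := by
    rw [List.idxOf_cons_self, List.idxOf_cons_ne _ (by simp)]
    omega
  have hpnot : ¬ (idx (p,false) (T ++ [(p,false)]) < idx (p,true) (T ++ [(p,false)])) := by
    rw [List.idxOf_append_of_mem ht, List.idxOf_append_of_notMem hnf,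
      List.idxOf_cons_self]
    have := List.idxOf_lt_length_iff.mpr ht
    omega
  have hset : (Finset.univ.filter fun i : Fin n =>
        idx (i,false) ((p,false)::T) < idx (i,true) ((p,false)::T))
      = insert p (Finset.univ.filter fun i : Fin n =>
        idx (i,false) (T++[(p,false)]) < idx (i,true) (T++[(p,false)])) := by
    ext i
    simp only [Finset.mem_insert, Finset.mem_filter, Finset.mem_univ, true_and]
    by_cases hip : i = p
    · subst hip; simp [hpyes]
    · simp only [hip, false_or]
      exact (hiff_of_ne h hip).symm
  show _ = _
  rw [bwd, bwd, hset, Finset.card_insert_of_notMem (by simp [hpnot])]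

end Words
section Words2

variable {n : ℕ}

local notation "idx" => @List.idxOf (Fin n × Bool) instBEqProd

lemma indexOf_ne_gw {W : List (Fin n × Bool)} (hW : IsGaussWord W) (i : Fin n) :
    idx (i,false) W ≠ idx (i,true) W := by
  intro he
  have h1 : idx (i,false) W < W.length := List.idxOf_lt_length_iff.mpr (gw_mem hW _)
  have h2 : idx (i,true) W < W.length := List.idxOf_lt_length_iff.mpr (gw_mem hW _)
  have e1 : W[idx (i,false) W]'h1 = (i, false) := List.getElem_idxOf h1
  have e2 : W[idx (i,true) W]'h2 = (i, true) := List.getElem_idxOf h2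
  have e3 : W[idx (i,false) W]'h1 = W[idx (i,true) W]'h2 := by
    congr 1
  rw [e1, e2] at e3
  simpa using congrArg Prod.snd e3

lemma idx_reverse {W : List (Fin n × Bool)} (hW : IsGaussWord W) (a : Fin n × Bool) :
    idx a W.reverse = W.length - 1 - idx a W := by
  have hmem := gw_mem hW a
  have h1 : idx a W < W.length := List.idxOf_lt_length_iff.mpr hmem
  have h2 : W.length - 1 - idx a W < W.reverse.length := by
    rw [List.length_reverse]; omega
  have e2 : W.reverse[W.length - 1 - idx a W]'h2 = a := by
    rw [List.getElem_reverse]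
    have h3 : W.length - 1 - (W.length - 1 - idx a W) = idx a W := by omega
    have := List.getElem_idxOf (xs := W) (x := a) h1
    convert this using 2
  have h3 : idx a W.reverse < W.reverse.length :=
    List.idxOf_lt_length_iff.mpr (by simpa using hmem)
  have e3 : W.reverse[idx a W.reverse]'h3 = a := List.getElem_idxOf h3
  exact (List.nodup_reverse.mpr (gw_nodup hW)).getElem_inj_iff.mp (e3.trans e2.symm)

lemma bwd_add_bwd_reverse {W : List (Fin n × Bool)} (hW : IsGaussWord W) :
    bwd W + bwd W.reverse = n := by
  classical
  have key : ∀ i : Fin n,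
      (idx (i,false) W.reverse < idx (i,true) W.reverse) ↔
      ¬ (idx (i,false) W < idx (i,true) W) := by
    intro i
    rw [idx_reverse hW, idx_reverse hW]
    have hne := indexOf_ne_gw hW i
    have h1 : idx (i,false) W < W.length := List.idxOf_lt_length_iff.mpr (gw_mem hW _)
    have h2 : idx (i,true) W < W.length := List.idxOf_lt_length_iff.mpr (gw_mem hW _)
    omega
  have hset : (Finset.univ.filter fun i : Fin n =>
        idx (i,false) W.reverse < idx (i,true) W.reverse)
      = Finset.univ.filter fun i : Fin n => ¬ (idx (i,false) W < idx (i,true) W) :=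
    Finset.filter_congr fun i _ => key i
  rw [bwd, bwd, hset, Finset.card_filter_add_card_filter_not]
  simp

lemma gw_ne_nil {W : List (Fin n × Bool)} (hW : IsGaussWord W) (hn : 1 ≤ n) : W ≠ [] := by
  intro h
  have := gw_length hW
  rw [h] at this
  simp at this
  omega

lemma bwd_rotate_succ {W : List (Fin n × Bool)} (hW : IsGaussWord W) (hn : 1 ≤ n)
    (k : ℕ) (hk : k < W.length) :
    if (W.get ⟨k, hk⟩).2
    then bwd (W.rotate (k+1)) = bwd (W.rotate k) + 1
    else bwd (W.rotate k) = bwd (W.rotate (k+1)) + 1 := by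
  have hgk : IsGaussWord (W.rotate k) := gw_rotate hW k
  have hne : W.rotate k ≠ [] := by
    intro h
    exact gw_ne_nil hW hn (by simpa using congrArg List.length h)
  obtain ⟨a, T, hT⟩ := List.exists_cons_of_ne_nil hne
  have h0lt : 0 < (W.rotate k).length := by rw [hT]; simp
  have ha : a = W.get ⟨k, hk⟩ := by
    have h0 : (W.rotate k).get ⟨0, h0lt⟩ = a := by rw [List.get_of_eq hT]; rfl
    rw [List.get_rotate] at h0
    rw [← h0]
    congr 1
    simp [Nat.mod_eq_of_lt hk]
  have hrot1 : W.rotate (k+1) = T ++ [a] := by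
    rw [← List.rotate_rotate, hT, List.rotate_cons_succ, List.rotate_zero]
  obtain ⟨p, b⟩ := a
  rw [hT] at hgk
  have hb : (W.get ⟨k, hk⟩).2 = b := by rw [← ha]
  cases b
  · simp only [hb, Bool.false_eq_true, if_false]
    rw [hT, hrot1]
    exact bwd_step_false hgk
  · simp only [hb, if_true]
    rw [hT, hrot1]
    exact bwd_step_true hgk

lemma bwd_rotate_mod (W : List (Fin n × Bool)) (k : ℕ) :
    bwd (W.rotate k) = bwd (W.rotate (k % W.length)) := by rw [List.rotate_mod]

end Words2

theorem component_main {n : ℕ} (W : List (Fin n × Bool)) (hW : IsGaussWord W) (hn : 1 ≤ n) :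
    wd W + wd W.reverse + 1 ≤ n ∧ (wd W + wd W.reverse + 1 = n ↔ IsAlternating W) := by
  classical
  have hL2 : W.length = 2 * n := gw_length hW
  set L := W.length with hL
  have hLpos : 0 < L := by omega
  have hL1 : (1 : ℕ) < L := by omega
  set f : ℕ → ℕ := fun k => bwd (W.rotate k) with hf
  have step : ∀ k (hk : k < L), if (W.get ⟨k, hk⟩).2
      then f (k+1) = f k + 1 else f k = f (k+1) + 1 :=
    fun k hk => bwd_rotate_succ hW hn k hk
  have fmod : ∀ k, f k = f (k % L) := fun k => bwd_rotate_mod W k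
  have fle : ∀ k, f k ≤ n := fun k => bwd_le _
  have hF : ((Finset.range L).image f).Nonempty :=
    ⟨f 0, Finset.mem_image.mpr ⟨0, Finset.mem_range.mpr hLpos, rfl⟩⟩
  set d := ((Finset.range L).image f).min' hF with hd
  set M := ((Finset.range L).image f).max' hF with hM
  have hfd : ∀ k, d ≤ f k := by
    intro k
    rw [fmod k]
    exact Finset.min'_le _ _
      (Finset.mem_image.mpr ⟨k % L, Finset.mem_range.mpr (Nat.mod_lt _ hLpos), rfl⟩)
  have hfM : ∀ k, f k ≤ M := by
    intro k
    rw [fmod k]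
    exact Finset.le_max' _ _
      (Finset.mem_image.mpr ⟨k % L, Finset.mem_range.mpr (Nat.mod_lt _ hLpos), rfl⟩)
  obtain ⟨kd, _, hkd2⟩ : ∃ kd, kd ∈ Finset.range L ∧ f kd = d := by
    obtain ⟨x, hx1, hx2⟩ := Finset.mem_image.mp (Finset.min'_mem _ hF)
    exact ⟨x, hx1, hx2⟩
  obtain ⟨kM, _, hkM2⟩ : ∃ kM, kM ∈ Finset.range L ∧ f kM = M := by
    obtain ⟨x, hx1, hx2⟩ := Finset.mem_image.mp (Finset.max'_mem _ hF)
    exact ⟨x, hx1, hx2⟩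
  -- value of wd W
  have hwdW : wd W = d := by
    apply le_antisymm
    · exact Nat.sInf_le ⟨kd, by rw [basedWd_eq]; exact hkd2.symm⟩
    · obtain ⟨k, hk⟩ := Nat.sInf_mem
        (⟨basedWd W, 0, by simp⟩ : Set.Nonempty {v | ∃ k, v = basedWd (W.rotate k)})
      rw [wd, hk, basedWd_eq]
      exact hfd k
  -- value of wd W.reverse
  have hrevval : ∀ k, bwd (W.reverse.rotate k) = n - f (L - k % L) := by
    intro k
    rw [List.rotate_reverse, ← hL]
    have h1 := bwd_add_bwd_reverse (gw_rotate hW (L - k % L))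
    have h2 := bwd_le (W.rotate (L - k % L))
    have h3 : f (L - k % L) = bwd (W.rotate (L - k % L)) := rfl
    omega
  have hsur : ∀ j, bwd (W.reverse.rotate (L - j % L)) = n - f j := by
    intro j
    rw [hrevval]
    congr 1
    have hjL : j % L < L := Nat.mod_lt _ hLpos
    rcases Nat.eq_zero_or_pos (j % L) with h0 | h0
    · have e1 : L - j % L = L := by omega
      rw [e1, Nat.mod_self, Nat.sub_zero]
      rw [fmod L, Nat.mod_self, fmod j, h0]
    · have e1 : (L - j % L) % L = L - j % L := Nat.mod_eq_of_lt (by omega)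
      rw [e1]
      have e2 : L - (L - j % L) = j % L := by omega
      rw [e2, ← fmod j]
  have hwdrev : wd W.reverse = n - M := by
    apply le_antisymm
    · refine Nat.sInf_le ⟨L - kM % L, ?_⟩
      rw [basedWd_eq, hsur kM, hkM2]
    · obtain ⟨k, hk⟩ := Nat.sInf_mem
        (⟨basedWd W.reverse, 0, by simp⟩ :
          Set.Nonempty {v | ∃ k, v = basedWd (W.reverse.rotate k)})
      rw [wd, hk, basedWd_eq, hrevval]
      have := hfM (L - k % L)
      omega
  -- d < M
  have hdM : d < M := by
    have s0 := step 0 hLpos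
    rw [show (0:ℕ)+1 = 1 from rfl] at s0
    have h0d := hfd 0; have h0M := hfM 0; have h1d := hfd 1; have h1M := hfM 1
    by_cases hb : (W.get ⟨0, hLpos⟩).2
    · rw [if_pos hb] at s0; omega
    · rw [if_neg hb] at s0; omega
  have hMn : M ≤ n := by rw [← hkM2]; exact fle kM
  refine ⟨by rw [hwdW, hwdrev]; omega, ?_⟩
  rw [hwdW, hwdrev]
  have heq_iff : (d + (n - M) + 1 = n) ↔ M = d + 1 := by omega
  rw [heq_iff]
  constructor
  · -- M = d + 1 → alternating
    intro hMd
    rw [IsAlternating, List.Chain', List.isChain_iff_getElem]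
    intro j hj
    have hjL : j < L := by omega
    have hj1L : j + 1 < L := by omega
    by_contra hne
    have heqflag : (W.get ⟨j+1, hj1L⟩).2 = (W.get ⟨j, hjL⟩).2 := by
      revert hne
      rcases hq : (W.get ⟨j, hjL⟩).2 <;> rcases hp : (W.get ⟨j+1, hj1L⟩).2 <;> simp_all
    have s1 := step j hjL
    have s2 := step (j+1) hj1L
    have e12 : f (j+1+1) = f (j+2) := by congr 1
    have hdj := hfd j
    have hMj2 := hfM (j+2)
    have hdj2 := hfd (j+2)
    have hMj := hfM j
    by_cases hb : (W.get ⟨j, hjL⟩).2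
    · rw [if_pos hb] at s1
      rw [if_pos (heqflag.trans hb)] at s2
      omega
    · rw [if_neg hb] at s1
      rw [if_neg (fun hc => hb (heqflag ▸ hc))] at s2
      omega
  · -- alternating → M = d + 1
    intro halt
    set c : Bool := (W.get ⟨0, hLpos⟩).2 with hc
    have hchain := List.isChain_iff_getElem.mp halt
    have hgetflag : ∀ j (hj : j < L), (W.get ⟨j, hj⟩).2 = (if j % 2 = 0 then c else !c) := by
      intro j
      induction j with
      | zero => intro hj; simp [hc]
      | succ j ih =>
        intro hj
        have hjL : j < L := by omega
        have hch := hchain j (by omega)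
        simp only [List.get_eq_getElem] at ih ⊢
        rw [hch, ih hjL]
        by_cases hp : j % 2 = 0
        · have hp1 : ¬ ((j+1) % 2 = 0) := by omega
          simp [hp, hp1]
        · have hp1 : (j+1) % 2 = 0 := by omega
          simp [hp, hp1]
    have stepAll : ∀ k, if (W.get ⟨k % L, Nat.mod_lt _ hLpos⟩).2
        then f (k+1) = f k + 1 else f k = f (k+1) + 1 := by
      intro k
      have hst := step (k % L) (Nat.mod_lt _ hLpos)
      have e1 : f (k % L + 1) = f (k + 1) := by
        rw [fmod (k % L + 1), fmod (k + 1)]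
        congr 1
        conv_rhs => rw [Nat.add_mod, Nat.mod_eq_of_lt hL1]
      have e2 : f (k % L) = f k := (fmod k).symm
      rw [e1, e2] at hst
      exact hst
    have hflagalt : ∀ k, (W.get ⟨(k+1) % L, Nat.mod_lt _ hLpos⟩).2
        = !(W.get ⟨k % L, Nat.mod_lt _ hLpos⟩).2 := by
      intro k
      rw [hgetflag _ (Nat.mod_lt _ hLpos), hgetflag _ (Nat.mod_lt _ hLpos)]
      have hkl : k % L < L := Nat.mod_lt _ hLpos
      have e3 : (k+1) % L = (k % L + 1) % L := by
        conv_lhs => rw [Nat.add_mod, Nat.mod_eq_of_lt hL1]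
      rcases eq_or_lt_of_le (Nat.succ_le_of_lt hkl) with he | hlt
      · -- k % L + 1 = L
        have he' : k % L + 1 = L := he
        have e4 : (k+1) % L = 0 := by rw [e3, he', Nat.mod_self]
        have godd : k % L % 2 = 1 := by omega
        rw [e4]
        simp [godd]
      · have e4 : (k+1) % L = k % L + 1 := by rw [e3, Nat.mod_eq_of_lt hlt]
        rw [e4]
        by_cases hp : k % L % 2 = 0
        · have hp1 : ¬ ((k % L + 1) % 2 = 0) := by omega
          simp [hp, hp1]
        · have hp1 : (k % L + 1) % 2 = 0 := by omega
          simp [hp, hp1]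
    have h2step : ∀ k, f (k + 2) = f k := by
      intro k
      have s1 := stepAll k
      have s2 := stepAll (k+1)
      have hfa := hflagalt k
      have e12 : f (k+1+1) = f (k+2) := by congr 1
      rcases hb : (W.get ⟨k % L, Nat.mod_lt _ hLpos⟩).2 with _ | _
      · rw [if_neg (by rw [hb]; simp)] at s1
        rw [hb] at hfa
        rw [if_pos (by rw [hfa]; simp)] at s2
        omega
      · rw [if_pos hb] at s1
        rw [hb] at hfa
        rw [if_neg (by rw [hfa]; simp)] at s2
        omega
    have hperiod2 : ∀ k, f k = f (k % 2) := by
      intro k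
      induction k using Nat.strong_induction_on with
      | _ k ih =>
        rcases Nat.lt_or_ge k 2 with hk2 | hk2
        · rw [Nat.mod_eq_of_lt hk2]
        · have e : k = (k - 2) + 2 := by omega
          rw [e, h2step (k - 2), ih (k - 2) (by omega)]
          congr 1
          omega
    have hM01 : M = f 0 ∨ M = f 1 := by
      rw [← hkM2, hperiod2 kM]
      rcases Nat.lt_or_ge (kM % 2) 1 with h | h
      · left; congr 1; omega
      · right; congr 1; have := Nat.mod_lt kM (show 0 < 2 by omega); omega
    have hd01 : d = f 0 ∨ d = f 1 := by
      rw [← hkd2, hperiod2 kd]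
      rcases Nat.lt_or_ge (kd % 2) 1 with h | h
      · left; congr 1; omega
      · right; congr 1; have := Nat.mod_lt kd (show 0 < 2 by omega); omega
    have s0 := step 0 hLpos
    rw [show (0:ℕ)+1 = 1 from rfl] at s0
    by_cases hb : (W.get ⟨0, hLpos⟩).2
    · rw [if_pos hb] at s0; omega
    · rw [if_neg hb] at s0; omega



section Link

variable {r : ℕ}

lemma ldSigma_add_rev (m : Fin r → Fin r → ℕ) (σ : Equiv.Perm (Fin r)) :
    ldSigma m σ + ldSigma m (σ.trans Fin.revPerm) = lcNum m := by
  classical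
  have e2 : (Finset.univ.filter fun p : Fin r × Fin r =>
        (σ.trans Fin.revPerm) p.1 < (σ.trans Fin.revPerm) p.2)
      = Finset.univ.filter fun p : Fin r × Fin r => σ p.2 < σ p.1 :=
    Finset.filter_congr fun p _ => by
      simp only [Equiv.trans_apply, Fin.revPerm_apply]
      exact Fin.rev_lt_rev
  rw [ldSigma, ldSigma, lcNum, e2,
    ← Finset.sum_filter_add_sum_filter_not
      (Finset.univ.filter fun p : Fin r × Fin r => p.1 ≠ p.2)
      (fun p : Fin r × Fin r => σ p.1 < σ p.2)]
  congr 1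
  · apply Finset.sum_congr _ fun _ _ => rfl
    rw [Finset.filter_filter]
    apply Finset.filter_congr
    intro p _
    constructor
    · intro h; exact ⟨fun he => absurd h (by rw [he]; exact lt_irrefl _), h⟩
    · intro h; exact h.2
  · apply Finset.sum_congr _ fun _ _ => rfl
    rw [Finset.filter_filter]
    apply Finset.filter_congr
    intro p _
    constructor
    · intro h
      exact ⟨fun he => absurd h (by rw [he]; exact lt_irrefl _),
        fun hlt => absurd (hlt.trans h) (lt_irrefl _)⟩
    · rintro ⟨hne, hnlt⟩
      rcases lt_or_gt_of_ne (fun h : σ p.1 = σ p.2 => hne (σ.injective h)) with h | h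
      · exact absurd h hnlt
      · exact h

lemma linkLd_le (m : Fin r → Fin r → ℕ) (σ : Equiv.Perm (Fin r)) :
    linkLd m ≤ ldSigma m σ := Nat.sInf_le ⟨σ, rfl⟩

lemma two_linkLd_le (m : Fin r → Fin r → ℕ) : 2 * linkLd m ≤ lcNum m := by
  have h := ldSigma_add_rev m (Equiv.refl (Fin r))
  have h1 := linkLd_le m (Equiv.refl (Fin r))
  have h2 := linkLd_le m ((Equiv.refl (Fin r)).trans Fin.revPerm)
  omega

lemma ldSigma_eq_of_two_eq (m : Fin r → Fin r → ℕ) (h : 2 * linkLd m = lcNum m)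
    (σ : Equiv.Perm (Fin r)) : ldSigma m σ = linkLd m := by
  have h1 := linkLd_le m σ
  have h2 := linkLd_le m (σ.trans Fin.revPerm)
  have h3 := ldSigma_add_rev m σ
  omega

lemma ldSigma_rev_of_symm (m : Fin r → Fin r → ℕ)
    (hsym : ∀ i j : Fin r, i ≠ j → m i j = m j i) (σ : Equiv.Perm (Fin r)) :
    ldSigma m σ = ldSigma m (σ.trans Fin.revPerm) := by
  classical
  have e2 : (Finset.univ.filter fun p : Fin r × Fin r =>
        (σ.trans Fin.revPerm) p.1 < (σ.trans Fin.revPerm) p.2)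
      = Finset.univ.filter fun p : Fin r × Fin r => σ p.2 < σ p.1 :=
    Finset.filter_congr fun p _ => by
      simp only [Equiv.trans_apply, Fin.revPerm_apply]
      exact Fin.rev_lt_rev
  rw [ldSigma, ldSigma, e2]
  refine Finset.sum_nbij' (fun p => Prod.swap p) (fun p => Prod.swap p) ?_ ?_ ?_ ?_ ?_
  · intro p hp
    simp only [Finset.mem_filter, Finset.mem_univ, true_and] at hp ⊢
    exact hp
  · intro p hp
    simp only [Finset.mem_filter, Finset.mem_univ, true_and] at hp ⊢
    exact hp
  · intro p _; simp
  · intro p _; simp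
  · intro p hp
    simp only [Finset.mem_filter, Finset.mem_univ, true_and] at hp
    simp only [Prod.fst_swap, Prod.snd_swap]
    apply hsym
    intro he
    rw [he] at hp
    exact lt_irrefl _ hp

lemma two_linkLd_eq_of_symm (m : Fin r → Fin r → ℕ)
    (hsym : ∀ i j : Fin r, i ≠ j → m i j = m j i) : 2 * linkLd m = lcNum m := by
  obtain ⟨σ0, hσ0⟩ := Nat.sInf_mem
    (⟨ldSigma m (Equiv.refl (Fin r)), Equiv.refl (Fin r), rfl⟩ :
      Set.Nonempty {v | ∃ σ : Equiv.Perm (Fin r), v = ldSigma m σ})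
  have h1 := ldSigma_add_rev m σ0
  have h2 := ldSigma_rev_of_symm m hsym σ0
  have : linkLd m = ldSigma m σ0 := hσ0
  omega

lemma ldSigma_swap_adj (m : Fin r → Fin r → ℕ) {i j : Fin r} (hij : i ≠ j)
    (σ : Equiv.Perm (Fin r)) (h0 : (σ i : ℕ) = 0) (h1 : (σ j : ℕ) = 1) :
    ldSigma m σ + m j i = ldSigma m (σ.trans (Equiv.swap (σ i) (σ j))) + m i j := by
  classical
  set τ : Equiv.Perm (Fin r) := σ.trans (Equiv.swap (σ i) (σ j)) with hτdef
  have hσij : σ i ≠ σ j := fun h => by rw [h] at h0; omega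
  have hτi : τ i = σ j := by simp [hτdef, Equiv.trans_apply, Equiv.swap_apply_left]
  have hτj : τ j = σ i := by simp [hτdef, Equiv.trans_apply, Equiv.swap_apply_right]
  have hτo : ∀ x, x ≠ i → x ≠ j → τ x = σ x := by
    intro x hxi hxj
    simp only [hτdef, Equiv.trans_apply]
    exact Equiv.swap_apply_of_ne_of_ne (fun h => hxi (σ.injective h)) (fun h => hxj (σ.injective h))
  have hother : ∀ x : Fin r, x ≠ i → x ≠ j → 2 ≤ (σ x : ℕ) := by
    intro x hxi hxj
    have hx1 : (σ x : ℕ) ≠ (σ i : ℕ) := fun h => hxi (σ.injective (Fin.ext h))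
    have hx2 : (σ x : ℕ) ≠ (σ j : ℕ) := fun h => hxj (σ.injective (Fin.ext h))
    omega
  have hiffa : ∀ x : Fin r, (x = i) ↔ ((σ x : ℕ) = 0) := by
    intro x
    constructor
    · intro h; rw [h, h0]
    · intro h; exact σ.injective (Fin.ext (by rw [h0]; exact h))
  have hiffb : ∀ x : Fin r, (x = j) ↔ ((σ x : ℕ) = 1) := by
    intro x
    constructor
    · intro h; rw [h, h1]
    · intro h; exact σ.injective (Fin.ext (by rw [h1]; exact h))
  have hτval : ∀ x : Fin r, (τ x : ℕ) =
      if (σ x : ℕ) = 0 then 1 else if (σ x : ℕ) = 1 then 0 else (σ x : ℕ) := by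
    intro x
    by_cases hxi : x = i
    · subst hxi
      rw [hτi, h1, if_pos h0]
    · by_cases hxj : x = j
      · subst hxj
        rw [hτj, h0]
        rw [if_neg (by omega), if_pos h1]
      · have h2 := hother x hxi hxj
        rw [hτo x hxi hxj, if_neg (by omega), if_neg (by omega)]
  have key : ∀ a b : Fin r, (τ a < τ b) ↔
      ((a = j ∧ b = i) ∨ (σ a < σ b ∧ ¬(a = i ∧ b = j))) := by
    intro a b
    simp only [Fin.lt_def, hτval, hiffa, hiffb]
    split_ifs <;> omega
  have hset : (Finset.univ.filter fun p : Fin r × Fin r => τ p.1 < τ p.2)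
      = insert (j, i) ((Finset.univ.filter fun p : Fin r × Fin r => σ p.1 < σ p.2).erase (i, j)) := by
    ext p
    obtain ⟨a, b⟩ := p
    simp only [Finset.mem_insert, Finset.mem_erase, Finset.mem_filter, Finset.mem_univ,
      true_and, Prod.mk.injEq, Ne]
    rw [key a b]
    tauto
  have hmem1 : (i, j) ∈ (Finset.univ.filter fun p : Fin r × Fin r => σ p.1 < σ p.2) := by
    simp only [Finset.mem_filter, Finset.mem_univ, true_and]
    rw [Fin.lt_def, h0, h1]
    omega
  have hmem2 : (j, i) ∉ ((Finset.univ.filter fun p : Fin r × Fin r => σ p.1 < σ p.2).erase (i, j)) := by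
    simp only [Finset.mem_erase, Finset.mem_filter, Finset.mem_univ, true_and, not_and]
    intro _
    rw [Fin.lt_def, h0, h1]
    omega
  rw [ldSigma, ldSigma, hset, Finset.sum_insert hmem2,
    ← Finset.add_sum_erase _ _ hmem1]
  have er1 : m (j, i).1 (j, i).2 = m j i := rfl
  have er2 : m (i, j).1 (i, j).2 = m i j := rfl
  rw [er1, er2]
  omega

lemma exists_perm_01 {i j : Fin r} (hij : i ≠ j) :
    ∃ σ : Equiv.Perm (Fin r), (σ i : ℕ) = 0 ∧ (σ j : ℕ) = 1 := by
  have hi := i.2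
  have hj := j.2
  have hr : 2 ≤ r := by
    by_contra h
    exact hij (Fin.ext (by omega))
  let z : Fin r := ⟨0, by omega⟩
  let o : Fin r := ⟨1, by omega⟩
  have hzo : z ≠ o := by
    intro h
    have := congrArg Fin.val h
    simp [z, o] at this
  let c : Equiv.Perm (Fin r) := Equiv.swap i z
  have hci : c i = z := Equiv.swap_apply_left _ _
  have hcj : c j ≠ z := by
    rw [← hci]
    exact fun h => hij (c.injective h).symm
  refine ⟨c.trans (Equiv.swap (c j) o), ?_, ?_⟩
  · have : (Equiv.swap (c j) o) (c i) = z := by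
      rw [hci]
      exact Equiv.swap_apply_of_ne_of_ne (fun h => hcj h.symm) hzo
    simp only [Equiv.trans_apply, this]; rfl
  · simp only [Equiv.trans_apply, Equiv.swap_apply_left]; rfl

lemma symm_of_two_linkLd_eq (m : Fin r → Fin r → ℕ) (h : 2 * linkLd m = lcNum m) :
    ∀ i j : Fin r, i ≠ j → m i j = m j i := by
  intro i j hij
  obtain ⟨σ, h0, h1⟩ := exists_perm_01 hij
  have e1 := ldSigma_eq_of_two_eq m h σ
  have e2 := ldSigma_eq_of_two_eq m h (σ.trans (Equiv.swap (σ i) (σ j)))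
  have e3 := ldSigma_swap_adj m hij σ h0 h1
  omega

lemma linkWd_eq {n : Fin r → ℕ} (W : ∀ i, List (Fin (n i) × Bool)) (m : Fin r → Fin r → ℕ) :
    linkWd W m = (∑ i, wd (W i)) + linkLd m := by
  classical
  have h1 : ∀ i : Fin r, wd (W i) ∈ {v | ∃ k, v = basedWd ((W i).rotate k)} :=
    fun i => Nat.sInf_mem ⟨_, 0, rfl⟩
  choose k0 hk0 using h1
  obtain ⟨σ0, hσ0⟩ := Nat.sInf_mem
    (⟨ldSigma m (Equiv.refl (Fin r)), Equiv.refl (Fin r), rfl⟩ :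
      Set.Nonempty {v | ∃ σ : Equiv.Perm (Fin r), v = ldSigma m σ})
  apply le_antisymm
  · have hle : linkWd W m ≤ (∑ i, basedWd ((W i).rotate (k0 i))) + ldSigma m σ0 :=
      Nat.sInf_le ⟨σ0, k0, rfl⟩
    calc linkWd W m ≤ (∑ i, basedWd ((W i).rotate (k0 i))) + ldSigma m σ0 := hle
      _ = (∑ i, wd (W i)) + linkLd m := by
          rw [← hσ0]
          congr 1
          exact (Finset.sum_congr rfl fun i _ => (hk0 i).symm)
  · obtain ⟨σ, k, hv⟩ := Nat.sInf_mem
      (⟨_, σ0, k0, rfl⟩ : Set.Nonempty {v | ∃ (σ : Equiv.Perm (Fin r)) (k : Fin r → ℕ),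
        v = (∑ i, basedWd ((W i).rotate (k i))) + ldSigma m σ})
    calc (∑ i, wd (W i)) + linkLd m
        ≤ (∑ i, basedWd ((W i).rotate (k i))) + ldSigma m σ :=
          add_le_add (Finset.sum_le_sum fun i _ => Nat.sInf_le ⟨k i, rfl⟩) (Nat.sInf_le ⟨σ, rfl⟩)
      _ = linkWd W m := hv.symm

lemma lc_rewrite (m : Fin r → Fin r → ℕ) :
    (∑ p ∈ Finset.univ.filter (fun p : Fin r × Fin r => p.1 < p.2), (m p.1 p.2 + m p.2 p.1))
      = lcNum m := by
  classical
  rw [lcNum,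
    ← Finset.sum_filter_add_sum_filter_not
      (Finset.univ.filter fun p : Fin r × Fin r => p.1 ≠ p.2)
      (fun p : Fin r × Fin r => p.1 < p.2),
    Finset.sum_add_distrib]
  congr 1
  · apply Finset.sum_congr _ fun _ _ => rfl
    rw [Finset.filter_filter]
    apply Finset.filter_congr
    intro p _
    constructor
    · intro h; exact ⟨ne_of_lt h, h⟩
    · intro h; exact h.2
  · refine Finset.sum_nbij' (fun p => Prod.swap p) (fun p => Prod.swap p) ?_ ?_
      (fun a _ => Prod.swap_swap a) (fun a _ => Prod.swap_swap a) ?_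
    · intro p hp
      simp only [Finset.mem_filter, Finset.mem_univ, true_and, Prod.fst_swap,
        Prod.snd_swap] at hp ⊢
      exact ⟨(ne_of_lt hp).symm, not_lt.mpr (le_of_lt hp)⟩
    · intro p hp
      simp only [Finset.mem_filter, Finset.mem_univ, true_and, Prod.fst_swap,
        Prod.snd_swap] at hp ⊢
      rcases lt_or_gt_of_ne hp.1 with h | h
      · exact absurd h hp.2
      · exact h
    · intro p _
      rfl

end Link

end LinkProof

/-- for a self-crossing diagram, `d(D) + d(-D) + r ≤ c(D)`,
with equality iff `D` has property C. -/
theorem warping_degree_sum_self_crossing (r : ℕ) (n : Fin r → ℕ)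
    (W : ∀ i, List (Fin (n i) × Bool)) (m : Fin r → Fin r → ℕ)
    (hW : ∀ i, IsGaussWord (W i)) (hm : ∀ i, m i i = 0)
    (hself : ∀ i, 1 ≤ n i) :
    linkWd W m + linkWd (fun i => (W i).reverse) m + r ≤ crossingNum n m ∧
    (linkWd W m + linkWd (fun i => (W i).reverse) m + r = crossingNum n m ↔
      PropertyC W m) := by
  classical
  have hdec1 : linkWd W m = (∑ i, wd (W i)) + linkLd m := LinkProof.linkWd_eq W m
  have hdec2 : linkWd (fun i => (W i).reverse) m = (∑ i, wd ((W i).reverse)) + linkLd m :=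
    LinkProof.linkWd_eq _ m
  have hcomp := fun i => LinkProof.component_main (W i) (hW i) (hself i)
  have hcross : crossingNum n m = (∑ i, n i) + lcNum m := by
    rw [crossingNum, LinkProof.lc_rewrite]
  have hsum_le : ∀ i : Fin r, wd (W i) + wd ((W i).reverse) + 1 ≤ n i := fun i => (hcomp i).1
  have hA : (∑ i, wd (W i)) + (∑ i, wd ((W i).reverse)) + r
      = ∑ i, (wd (W i) + wd ((W i).reverse) + 1) := by
    rw [Finset.sum_add_distrib, Finset.sum_add_distrib]
    simp
  have h2ld := LinkProof.two_linkLd_le m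
  have hs : (∑ i, (wd (W i) + wd ((W i).reverse) + 1)) ≤ ∑ i, n i :=
    Finset.sum_le_sum fun i _ => hsum_le i
  constructor
  · rw [hdec1, hdec2, hcross]
    omega
  · rw [hdec1, hdec2, hcross]
    constructor
    · intro heq
      have hEq : (∑ i, (wd (W i) + wd ((W i).reverse) + 1)) = (∑ i, n i)
          ∧ 2 * linkLd m = lcNum m := by omega
      obtain ⟨hEq1, hEq2⟩ := hEq
      refine ⟨?_, LinkProof.symm_of_two_linkLd_eq m hEq2⟩
      intro i
      have hterm := (Finset.sum_eq_sum_iff_of_le (fun i _ => hsum_le i)).1 hEq1 i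
        (Finset.mem_univ i)
      exact ((hcomp i).2).1 hterm
    · rintro ⟨halt, hsym⟩
      have hEq2 := LinkProof.two_linkLd_eq_of_symm m hsym
      have hEq1 : (∑ i, (wd (W i) + wd ((W i).reverse) + 1)) = ∑ i, n i :=
        Finset.sum_congr rfl fun i _ => ((hcomp i).2).2 (halt i)
      omega
end

section
/- Moving the base point past one crossing changes the based warping degree by exactly one: if W = x :: T is a Gauss word, then the based warping degree of T ++ [x] equals the based warping degree of W plus 1 when the flag of x is true (the base point passes an over-crossing), and equals it minus 1 when the flag of x is false. -/
section Aux

variable {α : Type*} [BEq α] [LawfulBEq α]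

lemma idxO_cons_self (a : α) (l : List α) : (a :: l).idxOf a = 0 := by
  simp [List.idxOf, List.findIdx_cons]

lemma idxO_cons_ne {a b : α} (l : List α) (h : b ≠ a) :
    (b :: l).idxOf a = l.idxOf a + 1 := by
  have : (b == a) = false := by simpa using h
  simp [List.idxOf, List.findIdx_cons, this]

lemma idxO_lt_length {a : α} {l : List α} (h : a ∈ l) : l.idxOf a < l.length :=
  List.findIdx_lt_length_of_exists ⟨a, h, by simp⟩

lemma idxO_append_mem {a : α} {l₁ : List α} (l₂ : List α) (h : a ∈ l₁) :
    (l₁ ++ l₂).idxOf a = l₁.idxOf a := by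
  show List.findIdx (· == a) (l₁ ++ l₂) = List.findIdx (· == a) l₁
  rw [List.findIdx_append]
  exact if_pos (idxO_lt_length h)

lemma idxO_append_not_mem {a : α} {l₁ : List α} (l₂ : List α) (h : a ∉ l₁) :
    (l₁ ++ l₂).idxOf a = l₂.idxOf a + l₁.length := by
  have hf : l₁.findIdx (· == a) = l₁.length :=
    List.findIdx_eq_length_of_false (fun x hx => by
      simp only [beq_eq_false_iff_ne, ne_eq]
      rintro rfl; exact h hx)
  show List.findIdx (· == a) (l₁ ++ l₂) = List.findIdx (· == a) l₂ + l₁.length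
  rw [List.findIdx_append, hf]
  exact if_neg (lt_irrefl _)

lemma setEq {n : ℕ} (x : Fin n × Bool) (T : List (Fin n × Bool))
    (hW : IsGaussWord (x :: T)) :
    (Finset.univ.filter fun i : Fin n =>
        (T ++ [x]).idxOf (i, false) < (T ++ [x]).idxOf (i, true))
    = if x.2 then
        insert x.1 (Finset.univ.filter fun i : Fin n =>
          (x :: T).idxOf (i, false) < (x :: T).idxOf (i, true))
      else
        (Finset.univ.filter fun i : Fin n =>
          (x :: T).idxOf (i, false) < (x :: T).idxOf (i, true)).erase x.1 := by
  obtain ⟨a, b⟩ := x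
  have h1 := (hW a).1
  have h2 := (hW a).2
  have hxT : (a, b) ∉ T := by
    intro h
    have : 2 ≤ List.count (a, b) ((a, b) :: T) := by
      rw [List.count_cons_self]
      have := List.one_le_count_iff.2 h
      omega
    cases b
    · omega
    · omega
  have hnbT : (a, !b) ∈ T := by
    have hne : (a, b) ≠ (a, !b) := by simp
    have : 0 < List.count (a, !b) ((a, b) :: T) := by
      cases b <;> simp_all
    rw [List.count_cons_of_ne hne] at this
    exact List.one_le_count_iff.1 this
  have key : ∀ i : Fin n, i ≠ a →
      ((T ++ [(a,b)]).idxOf (i, false) < (T ++ [(a,b)]).idxOf (i, true) ↔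
       ((a,b) :: T).idxOf (i, false) < ((a,b) :: T).idxOf (i, true)) := by
    intro i hi
    have mt : (i, true) ∈ T := by
      have : (i, true) ∈ (a,b) :: T := List.one_le_count_iff.1 (le_of_eq (hW i).1.symm)
      rcases List.mem_cons.1 this with h | h
      · exact absurd (congrArg Prod.fst h) hi
      · exact h
    have mf : (i, false) ∈ T := by
      have : (i, false) ∈ (a,b) :: T := List.one_le_count_iff.1 (le_of_eq (hW i).2.symm)
      rcases List.mem_cons.1 this with h | h
      · exact absurd (congrArg Prod.fst h) hi
      · exact h
    have ne1 : (a,b) ≠ (i, true) := fun h => hi (congrArg Prod.fst h).symm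
    have ne2 : (a,b) ≠ (i, false) := fun h => hi (congrArg Prod.fst h).symm
    rw [idxO_append_mem _ mt, idxO_append_mem _ mf,
      idxO_cons_ne _ ne1, idxO_cons_ne _ ne2]
    omega
  have keyA : ((T ++ [(a,b)]).idxOf (a, false) < (T ++ [(a,b)]).idxOf (a, true))
      ↔ b = true := by
    cases b
    · simp only [Bool.not_false] at hnbT
      rw [idxO_append_mem _ hnbT, idxO_append_not_mem _ hxT, idxO_cons_self]
      have := idxO_lt_length hnbT
      simp only [Bool.false_eq_true, iff_false]
      omega
    · simp only [Bool.not_true] at hnbT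
      rw [idxO_append_mem _ hnbT, idxO_append_not_mem _ hxT, idxO_cons_self]
      have := idxO_lt_length hnbT
      simp only [iff_true]
      omega
  have keyA2 : (((a,b) :: T).idxOf (a, false) < ((a,b) :: T).idxOf (a, true))
      ↔ b = false := by
    cases b
    · rw [idxO_cons_self, idxO_cons_ne _ (by simp : ((a,false) : Fin n × Bool) ≠ (a,true))]
      simp
    · rw [idxO_cons_self]
      simp
  ext i
  by_cases hi : i = a
  · subst hi
    cases b
    · simp only [Bool.false_eq_true, if_false, Finset.mem_filter, Finset.mem_univ, true_and,
        Finset.mem_erase, ne_eq, not_true_eq_false, false_and, iff_false]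
      rw [keyA]; simp
    · simp only [if_true, Finset.mem_filter, Finset.mem_univ, true_and, Finset.mem_insert,
        true_or, iff_true]
      rw [keyA]
  · have hkey := key i hi
    cases b
    · simp only [Bool.false_eq_true, if_false, Finset.mem_filter, Finset.mem_univ, true_and,
        Finset.mem_erase, ne_eq]
      rw [hkey]
      tauto
    · simp only [if_true, Finset.mem_filter, Finset.mem_univ, true_and, Finset.mem_insert]
      rw [hkey]
      tauto

end Aux

/-- moving the base point past one crossing changes the based
warping degree by exactly one. -/
theorem basedWd_move_base_point (n : ℕ) (x : Fin n × Bool) (T : List (Fin n × Bool))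
    (hW : IsGaussWord (x :: T)) :
    (x.2 = true → basedWd (T ++ [x]) = basedWd (x :: T) + 1) ∧
    (x.2 = false → basedWd (T ++ [x]) + 1 = basedWd (x :: T)) := by
  have h := setEq x T hW
  have hnotmem : x.2 = true → x.1 ∉ (Finset.univ.filter fun i : Fin n =>
      (x :: T).idxOf (i, false) < (x :: T).idxOf (i, true)) := by
    intro hb
    obtain ⟨a, b⟩ := x
    simp only at hb; subst hb
    simp only [Finset.mem_filter, Finset.mem_univ, true_and, not_lt, idxO_cons_self]
    exact Nat.zero_le _
  have hmem : x.2 = false → x.1 ∈ (Finset.univ.filter fun i : Fin n =>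
      (x :: T).idxOf (i, false) < (x :: T).idxOf (i, true)) := by
    intro hb
    obtain ⟨a, b⟩ := x
    simp only at hb; subst hb
    have hne : ((a, false) : Fin n × Bool) ≠ (a, true) := by simp
    simp only [Finset.mem_filter, Finset.mem_univ, true_and, idxO_cons_self,
      idxO_cons_ne _ hne]
    exact Nat.succ_pos _
  constructor
  · intro hb
    rw [hb] at h
    simp only [if_true] at h
    unfold basedWd
    rw [h, Finset.card_insert_of_notMem (hnotmem hb)]
  · intro hb
    rw [hb] at h
    simp only [Bool.false_eq_true, if_false] at h
    unfold basedWd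
    rw [h, Finset.card_erase_of_mem (hmem hb)]
    have := Finset.card_pos.2 ⟨x.1, hmem hb⟩
    omega
end

section
/- If a Gauss word W has n ≥ 1 crossings, then the based warping degree is not constant over cyclic rotations: the maximum of the based warping degree over all cyclic rotations of W is at least the minimum over all cyclic rotations plus 1. -/
lemma idx_conv {n : ℕ} (a : Fin n × Bool) (l : List (Fin n × Bool)) :
    l.idxOf a = @List.idxOf _ instBEqOfDecidableEq a l := by
  simp only [List.idxOf]
  congr 1
  funext x
  by_cases h : x = a <;> simp [h, instBEqOfDecidableEq]

local notation "idx" => @List.idxOf (_ × Bool) instBEqProd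

lemma key {n : ℕ} (i : Fin n) (b : Bool) (T : List (Fin n × Bool))
    (hW : IsGaussWord ((i, b) :: T)) :
    basedWd (((i, b) :: T).rotate 1) ≠ basedWd ((i, b) :: T) := by
  have hcb : ((i,b)::T).count (i,b) = 1 := by cases b <;> [exact (hW i).2; exact (hW i).1]
  have hcnb : ((i,b)::T).count (i,!b) = 1 := by
    cases b <;> [exact (hW i).1; exact (hW i).2]
  rw [List.count_cons_self] at hcb
  have hTb : (i,b) ∉ T := by
    simp only [Nat.add_eq_right] at hcb
    exact (List.count_eq_zero.mp hcb)
  have hTnb : (i,!b) ∈ T := by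
    rw [List.count_cons_of_ne (by simp)] at hcnb
    exact List.count_pos_iff.mp (by omega)
  have hrot : ((i,b)::T).rotate 1 = T ++ [(i,b)] := by
    simp [List.rotate_cons_succ]
  have hidx : ∀ c : Bool, idx (i,c) (T ++ [(i,b)]) =
      if c = b then T.length else idx (i,c) T := by
    intro c
    by_cases hc : c = b
    · subst hc
      rw [List.idxOf_append_of_notMem hTb]
      simp [List.idxOf_cons_self]
    · have hcc : ((i,c) : Fin n × Bool) = (i,!b) := by cases b <;> cases c <;> simp_all
      rw [hcc, List.idxOf_append_of_mem hTnb]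
      simp [hc]
  have hother : ∀ j : Fin n, j ≠ i → ∀ c : Bool,
      idx (j,c) (T ++ [(i,b)]) = idx (j,c) T ∧
      idx (j,c) ((i,b)::T) = idx (j,c) T + 1 := by
    intro j hj c
    have hne : ((i,b) : Fin n × Bool) ≠ (j,c) := by simp [hj.symm]
    have hcj : ((i,b)::T).count (j,c) = 1 := by
      cases c <;> [exact (hW j).2; exact (hW j).1]
    rw [List.count_cons_of_ne hne] at hcj
    have hmem : (j,c) ∈ T := List.count_pos_iff.mp (by omega)
    exact ⟨List.idxOf_append_of_mem hmem, List.idxOf_cons_ne _ hne⟩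
  unfold basedWd
  rw [hrot]
  set A := Finset.univ.filter fun j : Fin n =>
    idx (j, false) (T ++ [(i,b)]) < idx (j, true) (T ++ [(i,b)]) with hA
  set B := Finset.univ.filter fun j : Fin n =>
    idx (j, false) ((i,b)::T) < idx (j, true) ((i,b)::T) with hB
  have hsame : ∀ j : Fin n, j ≠ i → (j ∈ A ↔ j ∈ B) := by
    intro j hj
    simp only [hA, hB, Finset.mem_filter, Finset.mem_univ, true_and,
      (hother j hj false).1, (hother j hj true).1,
      (hother j hj false).2, (hother j hj true).2]
    omega
  have hlt : idx (i,!b) T < T.length := List.idxOf_lt_length_iff.mpr hTnb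
  have hiA : i ∈ A ↔ ¬ i ∈ B := by
    simp only [hA, hB, Finset.mem_filter, Finset.mem_univ, true_and,
      hidx true, hidx false]
    cases b <;>
      (simp_all [List.idxOf_cons_self,
        List.idxOf_cons_ne _ (show ((i,false):Fin n × Bool) ≠ (i,true) by simp),
        List.idxOf_cons_ne _ (show ((i,true):Fin n × Bool) ≠ (i,false) by simp)] <;> omega)
  by_cases hiB : i ∈ B
  · have hAe : A = B.erase i := by
      ext j
      by_cases hj : j = i
      · subst hj; simp [hiA, hiB]
      · simp [Finset.mem_erase, hj, hsame j hj]
    rw [hAe, Finset.card_erase_of_mem hiB]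
    have := Finset.card_pos.mpr ⟨i, hiB⟩
    omega
  · have hAi : A = insert i B := by
      ext j
      by_cases hj : j = i
      · subst hj; simp [hiA, hiB]
      · simp [hj, hsame j hj]
    rw [hAi, Finset.card_insert_of_notMem hiB]
    omega

/-- if `n ≥ 1`, the based warping degree is not constant over
the cyclic rotations: its maximum exceeds its minimum by at least 1. -/
theorem basedWd_rotations_not_constant (n : ℕ) (hn : 1 ≤ n)
    (W : List (Fin n × Bool)) (hW : IsGaussWord W) :
    sInf {v | ∃ k : ℕ, v = basedWd (W.rotate k)} + 1 ≤
      sSup {v | ∃ k : ℕ, v = basedWd (W.rotate k)} := by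
  set s := {v | ∃ k : ℕ, v = basedWd (W.rotate k)} with hs
  have i0 : Fin n := ⟨0, hn⟩
  have hmem0 : (i0, true) ∈ W := by
    have := (hW i0).1
    exact List.count_pos_iff.mp (by omega)
  obtain ⟨x, T, rfl⟩ : ∃ x T, W = x :: T := by
    cases W with
    | nil => simp at hmem0
    | cons a l => exact ⟨a, l, rfl⟩
  obtain ⟨i, b⟩ := x
  have hne := key i b T hW
  have ha : basedWd ((i,b)::T) ∈ s := ⟨0, by simp⟩
  have hb : basedWd (((i,b)::T).rotate 1) ∈ s := ⟨1, rfl⟩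
  have hbdd : BddAbove s := by
    refine ⟨n, fun v hv => ?_⟩
    obtain ⟨k, rfl⟩ := hv
    calc basedWd (((i,b)::T).rotate k) ≤ (Finset.univ : Finset (Fin n)).card :=
          Finset.card_filter_le _ _
      _ = n := by simp
  rcases lt_or_gt_of_ne hne with h | h
  · calc sInf s + 1 ≤ basedWd (((i,b)::T).rotate 1) + 1 := by
          exact Nat.add_le_add_right (Nat.sInf_le hb) 1
      _ ≤ basedWd ((i,b)::T) := h
      _ ≤ sSup s := le_csSup hbdd ha
  · calc sInf s + 1 ≤ basedWd ((i,b)::T) + 1 := Nat.add_le_add_right (Nat.sInf_le ha) 1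
      _ ≤ basedWd (((i,b)::T).rotate 1) := h
      _ ≤ sSup s := le_csSup hbdd hb
end

section
/- For an r-component link diagram D, let d(|D|) be the minimum of d(D_S) over all subsets S ⊆ Fin r, where D_S is obtained from D by replacing W^i by its reverse for each i ∈ S (all orientations of D). Then 2 · d(|D|) ≤ c(D). -/
open List in
lemma indexOf_instEq {α} [DecidableEq α] (inst : BEq α) [@LawfulBEq α inst] (x : α) (l : List α) :
    @List.idxOf α inst x l = @List.idxOf α instBEqOfDecidableEq x l := by
  induction l with
  | nil => rfl
  | cons a l ih =>
    simp only [List.idxOf_cons]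
    have : (@BEq.beq α inst a x) = (@BEq.beq α instBEqOfDecidableEq a x) := by
      by_cases h : a = x <;> simp [h]
    rw [this, ih]

open List in
lemma count_instEq {α} [DecidableEq α] (inst : BEq α) [@LawfulBEq α inst] (x : α) (l : List α) :
    @List.count α inst x l = @List.count α instBEqOfDecidableEq x l := by
  induction l with
  | nil => rfl
  | cons a l ih =>
    rw [@List.count_cons α inst, @List.count_cons α instBEqOfDecidableEq, ih]
    by_cases h : a = x <;> simp [h]

open List in
lemma rev_idx {α} [DecidableEq α] (x : α) : ∀ l : List α, l.count x = 1 →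
    l.reverse.idxOf x = l.length - 1 - l.idxOf x := by
  intro l
  induction l with
  | nil => simp
  | cons a l ih =>
    intro hc
    rw [count_cons] at hc
    by_cases hxa : x = a
    · subst hxa
      have hnx : x ∉ l := by
        intro hx
        have := count_pos_iff.mpr hx
        simp at hc
        omega
      rw [List.reverse_cons, idxOf_append_of_notMem (by simpa using hnx)]
      simp
    · have hc' : l.count x = 1 := by simpa [Ne.symm hxa] using hc
      have hx : x ∈ l := by
        rw [← count_pos_iff, hc']; omega
      rw [List.reverse_cons, idxOf_append_of_mem (by simpa using hx),
        idxOf_cons_ne _ (Ne.symm hxa), ih hc']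
      simp [Nat.succ_sub_one, Nat.sub_sub]
      omega

lemma basedWd_add_reverse {n : ℕ} (W : List (Fin n × Bool)) (hW : IsGaussWord W) :
    basedWd W + basedWd W.reverse = n := by
  classical
  have key : ∀ i : Fin n,
      (W.reverse.idxOf ((i, false) : Fin n × Bool) <
        W.reverse.idxOf ((i, true) : Fin n × Bool)) ↔
      ¬ (W.idxOf ((i, false) : Fin n × Bool) <
        W.idxOf ((i, true) : Fin n × Bool)) := by
    intro i
    have hct : @List.count _ instBEqOfDecidableEq ((i, true) : Fin n × Bool) W = 1 := by
      have := (hW i).1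
      rwa [count_instEq] at this
    have hcf : @List.count _ instBEqOfDecidableEq ((i, false) : Fin n × Bool) W = 1 := by
      have := (hW i).2
      rwa [count_instEq] at this
    have hmt : ((i, true) : Fin n × Bool) ∈ W := List.count_pos_iff.mp (by rw [(hW i).1]; omega)
    have hmf : ((i, false) : Fin n × Bool) ∈ W := List.count_pos_iff.mp (by rw [(hW i).2]; omega)
    have hlt : @List.idxOf _ instBEqOfDecidableEq ((i, true) : Fin n × Bool) W < W.length :=
      (@List.idxOf_lt_length_iff _ instBEqOfDecidableEq _ _ _).mpr hmt
    have hlf : @List.idxOf _ instBEqOfDecidableEq ((i, false) : Fin n × Bool) W < W.length :=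
      (@List.idxOf_lt_length_iff _ instBEqOfDecidableEq _ _ _).mpr hmf
    have hne : @List.idxOf _ instBEqOfDecidableEq ((i, false) : Fin n × Bool) W ≠
        @List.idxOf _ instBEqOfDecidableEq ((i, true) : Fin n × Bool) W := by
      intro h
      have h1 := @List.idxOf_get _ instBEqOfDecidableEq _ ((i, false) : Fin n × Bool) W hlf
      have h2 := @List.idxOf_get _ instBEqOfDecidableEq _ ((i, true) : Fin n × Bool) W hlt
      have h3 : (⟨_, hlf⟩ : Fin W.length) = ⟨_, hlt⟩ := Fin.ext h
      rw [h3, h2] at h1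
      simpa using congrArg Prod.snd h1
    simp only [indexOf_instEq]
    rw [rev_idx _ _ hcf, rev_idx _ _ hct]
    omega
  have hsplit := Finset.card_filter_add_card_filter_not
    (s := (Finset.univ : Finset (Fin n)))
    (p := fun i : Fin n => W.idxOf ((i, false) : Fin n × Bool) <
      W.idxOf ((i, true) : Fin n × Bool))
  have hfe : (Finset.univ.filter fun i : Fin n =>
      W.reverse.idxOf ((i, false) : Fin n × Bool) <
        W.reverse.idxOf ((i, true) : Fin n × Bool)) =
      (Finset.univ.filter fun i : Fin n =>
      ¬ (W.idxOf ((i, false) : Fin n × Bool) <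
        W.idxOf ((i, true) : Fin n × Bool))) :=
    Finset.filter_congr fun i _ => by rw [key i]
  unfold basedWd
  simp only [indexOf_instEq] at hsplit hfe ⊢
  rw [hfe]
  simp only [Finset.card_univ, Fintype.card_fin] at hsplit
  convert hsplit using 2

lemma ld_one_add_rev {r : ℕ} (m : Fin r → Fin r → ℕ) :
    ldSigma m 1 + ldSigma m Fin.revPerm =
      ∑ p ∈ Finset.univ.filter (fun p : Fin r × Fin r => p.1 < p.2),
        (m p.1 p.2 + m p.2 p.1) := by
  classical
  have e1 : ldSigma m 1 =
      ∑ p ∈ Finset.univ.filter (fun p : Fin r × Fin r => p.1 < p.2), m p.1 p.2 := by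
    unfold ldSigma; simp; congr
  have e2 : ldSigma m Fin.revPerm =
      ∑ p ∈ Finset.univ.filter (fun p : Fin r × Fin r => p.1 < p.2), m p.2 p.1 := by
    unfold ldSigma
    exact Finset.sum_equiv (Equiv.prodComm _ _) (by simp [Fin.rev_lt_rev]) (by simp)
  rw [e1, e2, ← Finset.sum_add_distrib]

/-- `2 · d(|D|) ≤ c(D)`, where `d(|D|)` is the minimum of the warping
degree over all orientations of `D`. -/
theorem two_unoriented_wd_le_crossingNum (r : ℕ) (n : Fin r → ℕ)
    (W : ∀ i, List (Fin (n i) × Bool)) (m : Fin r → Fin r → ℕ)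
    (hW : ∀ i, IsGaussWord (W i)) (hm : ∀ i, m i i = 0) :
    2 * sInf {v | ∃ S : Finset (Fin r),
        v = linkWd (fun i => if i ∈ S then (W i).reverse else W i) m} ≤
      crossingNum n m := by
  classical
  set I := sInf {v | ∃ S : Finset (Fin r),
      v = linkWd (fun i => if i ∈ S then (W i).reverse else W i) m} with hI
  have h1 : I ≤ (∑ i, basedWd (W i)) + ldSigma m 1 := by
    refine le_trans (Nat.sInf_le ⟨(∅ : Finset (Fin r)), rfl⟩) ?_
    refine Nat.sInf_le ⟨1, fun _ => 0, ?_⟩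
    simp [List.rotate_zero]
  have h2 : I ≤ (∑ i, basedWd ((W i).reverse)) + ldSigma m Fin.revPerm := by
    refine le_trans (Nat.sInf_le ⟨(Finset.univ : Finset (Fin r)), rfl⟩) ?_
    refine Nat.sInf_le ⟨Fin.revPerm, fun _ => 0, ?_⟩
    simp [List.rotate_zero]
  have hA : (∑ i, basedWd (W i)) + (∑ i, basedWd ((W i).reverse)) = ∑ i, n i := by
    rw [← Finset.sum_add_distrib]
    exact Finset.sum_congr rfl fun i _ => basedWd_add_reverse (W i) (hW i)
  have hld := ld_one_add_rev m
  unfold crossingNum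
  omega
end

section
/- For an r-component link diagram D, the equality 2 · d(|D|) = c(D) holds if and only if n i = 0 for every i (each component is a simple closed curve, having no self-crossings) and m i j = m j i for all i ≠ j (in every two-component subdiagram the number of over-crossings of a component equals the number of its under-crossings). -/

lemma aux_count_eq {α : Type*} [DecidableEq α] [inst : BEq α] [LawfulBEq α] (a : α) (l : List α) :
    l.count a = @List.count α instBEqOfDecidableEq a l := by
  induction l with
  | nil => rfl
  | cons b t ih =>
    rw [List.count_cons, @List.count_cons α instBEqOfDecidableEq, ih]
    by_cases h : b = a <;> simp [h]

lemma aux_idxOf_eq {α : Type*} [DecidableEq α] [inst : BEq α] [LawfulBEq α] (a : α) (l : List α) :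
    l.idxOf a = @List.idxOf α instBEqOfDecidableEq a l := by
  induction l with
  | nil => rfl
  | cons b t ih =>
    rw [List.idxOf_cons]
    by_cases h : b = a
    · subst h; simp [List.idxOf_cons_self]
    · have hb : (b == a) = false := by simpa using h
      simp [hb, @List.idxOf_cons_ne _ instBEqOfDecidableEq _ _ _ _ h, ih, Nat.succ_eq_add_one]

lemma aux_idxOf_reverse {α : Type*} [DecidableEq α] :
    ∀ (l : List α) (x : α), l.count x = 1 →
      l.reverse.idxOf x = l.length - 1 - l.idxOf x := by
  intro l
  induction l with
  | nil => intro x hx; simp at hx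
  | cons a t ih =>
    intro x hx
    by_cases hax : a = x
    · subst hax
      have hxt : a ∉ t := by
        rw [← List.count_eq_zero]
        have := List.count_cons_self (a := a) (l := t)
        omega
      rw [List.idxOf_cons_self, List.reverse_cons,
        List.idxOf_append_of_notMem (by simpa using hxt)]
      simp
    · have hcx : t.count x = 1 := by
        rw [List.count_cons_of_ne hax] at hx; exact hx
      have hmem : x ∈ t := List.count_pos_iff.mp (by omega)
      have hlt : t.idxOf x < t.length := List.idxOf_lt_length_iff.mpr hmem
      rw [List.idxOf_cons_ne t hax, List.reverse_cons,
        List.idxOf_append_of_mem (by simpa using hmem), ih x hcx]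
      simp only [List.length_cons, Nat.succ_eq_add_one]
      omega

lemma aux_gauss_rotate {N : ℕ} {l : List (Fin N × Bool)} (h : IsGaussWord l) (k : ℕ) :
    IsGaussWord (l.rotate k) := by
  intro i
  have hc : ∀ x : Fin N × Bool,
      @List.count _ instBEqProd x (l.rotate k) = @List.count _ instBEqProd x l := by
    intro x
    rw [aux_count_eq (inst := instBEqProd), aux_count_eq (inst := instBEqProd)]
    exact @List.Perm.count_eq _ instBEqOfDecidableEq _ _ (List.rotate_perm l k) x
  exact ⟨by rw [hc]; exact (h i).1, by rw [hc]; exact (h i).2⟩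

lemma aux_basedWd_le {N : ℕ} (l : List (Fin N × Bool)) : basedWd l ≤ N := by
  calc basedWd l ≤ (Finset.univ : Finset (Fin N)).card := by unfold basedWd; exact Finset.card_filter_le _ _
    _ = N := by simp

lemma aux_basedWd_add_reverse {N : ℕ} {l : List (Fin N × Bool)} (h : IsGaussWord l) :
    basedWd l + basedWd l.reverse = N := by
  classical
  have key : ∀ i : Fin N,
      (l.reverse.idxOf (i, false) < l.reverse.idxOf (i, true)) ↔
      ¬ (l.idxOf (i, false) < l.idxOf (i, true)) := by
    intro i
    obtain ⟨ht, hf⟩ := h i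
    have hmt : (i, true) ∈ l := List.count_pos_iff.mp (by omega)
    have hmf : (i, false) ∈ l := List.count_pos_iff.mp (by omega)
    rw [aux_count_eq] at ht hf
    simp only [aux_idxOf_eq]
    have h1 := aux_idxOf_reverse l (i, true) ht
    have h2 := aux_idxOf_reverse l (i, false) hf
    have hlt : @List.idxOf _ instBEqOfDecidableEq (i, true) l < l.length :=
      (@List.idxOf_lt_length_iff _ instBEqOfDecidableEq _ _ _).mpr hmt
    have hlf : @List.idxOf _ instBEqOfDecidableEq (i, false) l < l.length :=
      (@List.idxOf_lt_length_iff _ instBEqOfDecidableEq _ _ _).mpr hmf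
    have hne : @List.idxOf _ instBEqOfDecidableEq (i, false) l
        ≠ @List.idxOf _ instBEqOfDecidableEq (i, true) l := by
      intro hc
      have := (@List.idxOf_inj _ instBEqOfDecidableEq _ _ _ _ hmf).mp hc
      simp at this
    omega
  unfold basedWd
  have h2 : (Finset.univ.filter fun i : Fin N =>
      l.reverse.idxOf (i, false) < l.reverse.idxOf (i, true)) =
      Finset.univ.filter (fun i : Fin N =>
        ¬ (l.idxOf (i, false) < l.idxOf (i, true))) := by
    apply Finset.filter_congr
    intro i _
    simpa using key i
  rw [h2]
  rw [Finset.card_filter_add_card_filter_not]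
  simp


lemma aux_notmem_of_count {α : Type*} [DecidableEq α] {a : α} {t : List α}
    (h : (a :: t).count a = 1) : a ∉ t := by
  rw [← List.count_eq_zero]
  have := List.count_cons_self (a := a) (l := t)
  omega

lemma aux_mem_of_count {α : Type*} [DecidableEq α] {a x : α} {t : List α}
    (hax : x ≠ a) (h : (a :: t).count x = 1) : x ∈ t := by
  rw [List.count_cons_of_ne (Ne.symm hax)] at h
  exact List.count_pos_iff.mp (by omega)

lemma aux_basedWd_rotate_one {N : ℕ} {l : List (Fin N × Bool)} (h : IsGaussWord l)
    (hne : l ≠ []) : basedWd (l.rotate 1) ≠ basedWd l := by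
  classical
  obtain ⟨a, t, rfl⟩ := List.exists_cons_of_ne_nil hne
  obtain ⟨i0, f⟩ := a
  have hrot : ((i0, f) :: t).rotate 1 = t ++ [(i0, f)] := by
    rw [show (1 : ℕ) = 0 + 1 from rfl, List.rotate_cons_succ, List.rotate_zero]
  have hc1 : @List.count _ instBEqOfDecidableEq (i0, f) ((i0, f) :: t) = 1 := by
    rw [← aux_count_eq (inst := instBEqProd)]
    cases f
    · exact (h i0).2
    · exact (h i0).1
  have hc2 : @List.count _ instBEqOfDecidableEq (i0, !f) ((i0, f) :: t) = 1 := by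
    rw [← aux_count_eq (inst := instBEqProd)]
    cases f
    · exact (h i0).1
    · exact (h i0).2
  have hft : (i0, f) ∉ t := aux_notmem_of_count hc1
  have hnfne : ((i0, f) : Fin N × Bool) ≠ (i0, !f) := by simp
  have hnft : (i0, !f) ∈ t := aux_mem_of_count (fun hx => hnfne hx.symm) hc2
  -- idxOf computations, all with the DecidableEq-induced instance
  have hA1 : @List.idxOf _ instBEqOfDecidableEq (i0, f) ((i0, f) :: t) = 0 :=
    @List.idxOf_cons_self _ _ instBEqOfDecidableEq _ _
  have hA2 : @List.idxOf _ instBEqOfDecidableEq (i0, !f) ((i0, f) :: t)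
      = @List.idxOf _ instBEqOfDecidableEq (i0, !f) t + 1 :=
    @List.idxOf_cons_ne _ instBEqOfDecidableEq _ _ _ t hnfne
  have hB1 : @List.idxOf _ instBEqOfDecidableEq (i0, f) (t ++ [(i0, f)]) = t.length := by
    rw [@List.idxOf_append_of_notMem _ _ _ instBEqOfDecidableEq _ _ hft, @List.idxOf_cons_self _ _ instBEqOfDecidableEq _ _]
    omega
  have hB2 : @List.idxOf _ instBEqOfDecidableEq (i0, !f) (t ++ [(i0, f)])
      = @List.idxOf _ instBEqOfDecidableEq (i0, !f) t :=
    @List.idxOf_append_of_mem _ _ _ instBEqOfDecidableEq _ _ hnft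
  have hBlt : @List.idxOf _ instBEqOfDecidableEq (i0, !f) t < t.length :=
    (@List.idxOf_lt_length_iff _ instBEqOfDecidableEq _ _ _).mpr hnft
  have hother : ∀ (j : Fin N) (b : Bool), j ≠ i0 →
      ((j, b) ∈ t ∧
       @List.idxOf _ instBEqOfDecidableEq (j, b) ((i0, f) :: t)
          = @List.idxOf _ instBEqOfDecidableEq (j, b) t + 1 ∧
       @List.idxOf _ instBEqOfDecidableEq (j, b) (t ++ [(i0, f)])
          = @List.idxOf _ instBEqOfDecidableEq (j, b) t) := by
    intro j b hj
    have hne2 : ((i0, f) : Fin N × Bool) ≠ (j, b) := by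
      simp [Prod.ext_iff]; intro hc; exact absurd hc.symm hj
    have hcj : @List.count _ instBEqOfDecidableEq (j, b) ((i0, f) :: t) = 1 := by
      rw [← aux_count_eq (inst := instBEqProd)]
      cases b
      · exact (h j).2
      · exact (h j).1
    have hmem : (j, b) ∈ t := aux_mem_of_count (fun hx => hne2 hx.symm) hcj
    exact ⟨hmem, @List.idxOf_cons_ne _ instBEqOfDecidableEq _ _ _ t hne2, @List.idxOf_append_of_mem _ _ _ instBEqOfDecidableEq _ _ hmem⟩
  -- the two filter sets
  rw [hrot]
  unfold basedWd
  set F := Finset.univ.filter (fun i : Fin N =>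
      ((i0, f) :: t).idxOf (i, false) < ((i0, f) :: t).idxOf (i, true)) with hF
  set F' := Finset.univ.filter (fun i : Fin N =>
      (t ++ [(i0, f)]).idxOf (i, false) < (t ++ [(i0, f)]).idxOf (i, true)) with hF'
  have hmemF : ∀ j : Fin N, j ∈ F ↔
      @List.idxOf _ instBEqOfDecidableEq (j, false) ((i0, f) :: t)
        < @List.idxOf _ instBEqOfDecidableEq (j, true) ((i0, f) :: t) := by
    intro j
    rw [hF, Finset.mem_filter]
    simp only [Finset.mem_univ, true_and]
    rw [aux_idxOf_eq (inst := instBEqProd), aux_idxOf_eq (inst := instBEqProd)]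
  have hmemF' : ∀ j : Fin N, j ∈ F' ↔
      @List.idxOf _ instBEqOfDecidableEq (j, false) (t ++ [(i0, f)])
        < @List.idxOf _ instBEqOfDecidableEq (j, true) (t ++ [(i0, f)]) := by
    intro j
    rw [hF', Finset.mem_filter]
    simp only [Finset.mem_univ, true_and]
    rw [aux_idxOf_eq (inst := instBEqProd), aux_idxOf_eq (inst := instBEqProd)]
  have herase : F'.erase i0 = F.erase i0 := by
    ext j
    simp only [Finset.mem_erase]
    constructor
    · rintro ⟨hji, hj⟩
      refine ⟨hji, ?_⟩
      obtain ⟨_, e1, e2⟩ := hother j false hji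
      obtain ⟨_, e3, e4⟩ := hother j true hji
      rw [hmemF'] at hj
      rw [hmemF]
      rw [e2, e4] at hj
      rw [e1, e3]
      omega
    · rintro ⟨hji, hj⟩
      refine ⟨hji, ?_⟩
      obtain ⟨_, e1, e2⟩ := hother j false hji
      obtain ⟨_, e3, e4⟩ := hother j true hji
      rw [hmemF] at hj
      rw [hmemF']
      rw [e1, e3] at hj
      rw [e2, e4]
      omega
  have hi0F : i0 ∈ F ↔ f = false := by
    rw [hmemF]
    cases f
    · simp only [Bool.not_false] at hA1 hA2
      rw [hA1, hA2]
      simp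
    · simp only [Bool.not_true] at hA1 hA2
      rw [hA1, hA2]
      simp
  have hi0F' : i0 ∈ F' ↔ f = true := by
    rw [hmemF']
    cases f
    · simp only [Bool.not_false] at hB1 hB2 hBlt
      rw [hB1, hB2]
      simp only [Bool.false_eq_true, iff_false, not_lt]
      omega
    · simp only [Bool.not_true] at hB1 hB2 hBlt
      rw [hB1, hB2]
      simp only [iff_true]
      omega
  cases f
  · have h1 : i0 ∈ F := hi0F.mpr rfl
    have h2 : i0 ∉ F' := fun hc => by simp at hi0F'; exact hi0F' hc
    have e1 : F'.erase i0 = F' := Finset.erase_eq_of_notMem h2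
    have e2 := Finset.card_erase_add_one h1
    rw [← e1, herase]
    have : (F.erase i0).card + 1 = F.card := Finset.card_erase_add_one h1
    omega
  · have h1 : i0 ∉ F := fun hc => by simp at hi0F; exact hi0F hc
    have h2 : i0 ∈ F' := hi0F'.mpr rfl
    have e1 : F.erase i0 = F := Finset.erase_eq_of_notMem h1
    have e2 := Finset.card_erase_add_one h2
    rw [herase, e1] at e2
    omega


lemma aux_sum_swap {r : ℕ} (m : Fin r → Fin r → ℕ) (P : Fin r × Fin r → Prop)
    [DecidablePred P] :
    ∑ p ∈ Finset.univ.filter (fun p : Fin r × Fin r => P (p.2, p.1)), m p.1 p.2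
      = ∑ p ∈ Finset.univ.filter P, m p.2 p.1 := by
  refine Finset.sum_nbij' (fun p => Prod.swap p) (fun p => Prod.swap p) ?_ ?_ ?_ ?_ ?_
  · intro p hp
    simp only [Finset.mem_filter, Finset.mem_univ, true_and] at hp ⊢
    exact hp
  · intro p hp
    simp only [Finset.mem_filter, Finset.mem_univ, true_and] at hp ⊢
    simpa using hp
  · intro p _; simp
  · intro p _; simp
  · intro p _; rfl

lemma aux_ld_pair {r : ℕ} (m : Fin r → Fin r → ℕ) (σ : Equiv.Perm (Fin r)) :
    ldSigma m σ + ldSigma m (σ.trans Fin.revPerm) = lcNum m := by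
  classical
  unfold ldSigma lcNum
  have e1 : (Finset.univ.filter fun p : Fin r × Fin r => σ p.1 < σ p.2)
      = (Finset.univ.filter fun p : Fin r × Fin r => p.1 ≠ p.2).filter
          (fun p => σ p.1 < σ p.2) := by
    rw [Finset.filter_filter]
    apply Finset.filter_congr
    intro p _
    constructor
    · intro hp
      exact ⟨fun hc => absurd (congrArg σ hc) (ne_of_lt hp), hp⟩
    · exact fun hp => hp.2
  have e2 : (Finset.univ.filter fun p : Fin r × Fin r =>
        (σ.trans Fin.revPerm) p.1 < (σ.trans Fin.revPerm) p.2)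
      = (Finset.univ.filter fun p : Fin r × Fin r => p.1 ≠ p.2).filter
          (fun p => ¬ (σ p.1 < σ p.2)) := by
    rw [Finset.filter_filter]
    apply Finset.filter_congr
    intro p _
    simp only [Equiv.trans_apply, Fin.revPerm_apply, Fin.rev_lt_rev]
    constructor
    · intro hp
      exact ⟨fun hc => absurd (congrArg σ hc) (ne_of_gt hp), not_lt_of_gt hp⟩
    · intro hp
      exact lt_of_le_of_ne (le_of_not_gt hp.2) (fun hc => hp.1 ((σ.injective hc).symm))
  rw [e1, e2, Finset.sum_filter_add_sum_filter_not]

lemma aux_lc_eq {r : ℕ} (m : Fin r → Fin r → ℕ) :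
    lcNum m = ∑ p ∈ Finset.univ.filter (fun p : Fin r × Fin r => p.1 < p.2),
      (m p.1 p.2 + m p.2 p.1) := by
  classical
  unfold lcNum
  rw [← Finset.sum_filter_add_sum_filter_not
    (Finset.univ.filter fun p : Fin r × Fin r => p.1 ≠ p.2)
    (fun p => p.1 < p.2) (fun p => m p.1 p.2), Finset.sum_add_distrib]
  congr 1
  · apply Finset.sum_congr _ (fun _ _ => rfl)
    rw [Finset.filter_filter]
    apply Finset.filter_congr
    intro p _
    constructor
    · exact fun hp => hp.2
    · intro hp
      exact ⟨ne_of_lt hp, hp⟩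
  · have e3 : (Finset.univ.filter fun p : Fin r × Fin r => p.1 ≠ p.2).filter
        (fun p => ¬ (p.1 < p.2))
        = Finset.univ.filter (fun p : Fin r × Fin r => p.2 < p.1) := by
      rw [Finset.filter_filter]
      apply Finset.filter_congr
      intro p _
      constructor
      · intro hp
        exact lt_of_le_of_ne (le_of_not_gt hp.2) (Ne.symm hp.1)
      · intro hp
        exact ⟨ne_of_gt hp, not_lt_of_gt hp⟩
    rw [e3]
    exact aux_sum_swap m (fun p => p.1 < p.2)

lemma aux_ld_rev_symm {r : ℕ} (m : Fin r → Fin r → ℕ)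
    (hsym : ∀ i j : Fin r, i ≠ j → m i j = m j i) (σ : Equiv.Perm (Fin r)) :
    ldSigma m (σ.trans Fin.revPerm) = ldSigma m σ := by
  classical
  unfold ldSigma
  have e2 : (Finset.univ.filter fun p : Fin r × Fin r =>
        (σ.trans Fin.revPerm) p.1 < (σ.trans Fin.revPerm) p.2)
      = Finset.univ.filter (fun p : Fin r × Fin r => σ p.2 < σ p.1) := by
    apply Finset.filter_congr
    intro p _
    simp only [Equiv.trans_apply, Fin.revPerm_apply, Fin.rev_lt_rev]
  rw [e2]
  have := aux_sum_swap m (fun p : Fin r × Fin r => σ p.1 < σ p.2)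
  simp only at this
  rw [this]
  apply Finset.sum_congr rfl
  intro p hp
  simp only [Finset.mem_filter] at hp
  exact (hsym p.1 p.2 (fun hc => absurd (congrArg σ hc) (ne_of_lt hp.2))).symm


lemma aux_symm_of_const {r : ℕ} (m : Fin r → Fin r → ℕ)
    (hconst : ∀ σ σ' : Equiv.Perm (Fin r), ldSigma m σ = ldSigma m σ')
    {i j : Fin r} (hij : i ≠ j) : m i j = m j i := by
  classical
  have hr : 2 ≤ r := by
    rcases r with _ | _ | r
    · exact i.elim0
    · exact absurd (Fin.ext (by have hi := i.isLt; have hj := j.isLt; omega)) hij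
    · omega
  set z0 : Fin r := ⟨0, by omega⟩ with hz0
  set z1 : Fin r := ⟨1, by omega⟩ with hz1
  have hz01 : z0 ≠ z1 := by simp [hz0, hz1, Fin.ext_iff]
  have hv0 : (z0 : ℕ) = 0 := rfl
  have hv1 : (z1 : ℕ) = 1 := rfl
  set w : Equiv.Perm (Fin r) := Equiv.swap i z0 with hw
  have hwi : w i = z0 := Equiv.swap_apply_left i z0
  have hj' : w j ≠ z0 := by
    rw [← hwi]
    exact fun hc => hij ((w.injective hc).symm)
  set e : Equiv.Perm (Fin r) := w.trans (Equiv.swap (w j) z1) with he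
  have hei : e i = z0 := by
    simp only [he, Equiv.trans_apply, hwi]
    exact Equiv.swap_apply_of_ne_of_ne (Ne.symm hj') hz01
  have hej : e j = z1 := by
    simp only [he, Equiv.trans_apply]
    exact Equiv.swap_apply_left (w j) z1
  have heiz : ∀ a, e a = z0 ↔ a = i := fun a => by
    rw [← hei, EmbeddingLike.apply_eq_iff_eq]
  have hejz : ∀ a, e a = z1 ↔ a = j := fun a => by
    rw [← hej, EmbeddingLike.apply_eq_iff_eq]
  set s : Equiv.Perm (Fin r) := Equiv.swap z0 z1 with hs
  have hsv : ∀ u : Fin r, ((s u : Fin r) : ℕ)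
      = if u = z0 then 1 else if u = z1 then 0 else (u : ℕ) := by
    intro u
    by_cases h0 : u = z0
    · rw [if_pos h0, h0, hs, Equiv.swap_apply_left]
    · by_cases h1 : u = z1
      · rw [if_neg h0, if_pos h1, h1, hs, Equiv.swap_apply_right]
      · rw [if_neg h0, if_neg h1, hs, Equiv.swap_apply_of_ne_of_ne h0 h1]
  have hval : ∀ u : Fin r, u ≠ z0 → u ≠ z1 → 2 ≤ (u : ℕ) := by
    intro u h0 h1
    have e0 : (u : ℕ) ≠ 0 := fun hc => h0 (Fin.ext (by rw [hc, hv0]))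
    have e1 : (u : ℕ) ≠ 1 := fun hc => h1 (Fin.ext (by rw [hc, hv1]))
    omega
  have hkey : ∀ u v : Fin r, ¬(u = z0 ∧ v = z1) → ¬(u = z1 ∧ v = z0) →
      (s u < s v ↔ u < v) := by
    intro u v h1 h2
    rw [Fin.lt_def, Fin.lt_def, hsv u, hsv v]
    by_cases hu0 : u = z0
    · have hv1' : ¬ v = z1 := fun hc => h1 ⟨hu0, hc⟩
      by_cases hv0' : v = z0
      · rw [if_pos hu0, if_pos hv0', hu0, hv0']
        simp
      · rw [if_pos hu0, if_neg hv0', if_neg hv1']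
        have := hval v hv0' hv1'
        rw [hu0, hv0]
        omega
    · by_cases hu1 : u = z1
      · have hv0' : ¬ v = z0 := fun hc => h2 ⟨hu1, hc⟩
        by_cases hv1' : v = z1
        · rw [if_neg hu0, if_pos hu1, if_neg hv0', if_pos hv1', hu1, hv1']
          simp
        · rw [if_neg hu0, if_pos hu1, if_neg hv0', if_neg hv1']
          have := hval v hv0' hv1'
          rw [hu1, hv1]
          omega
      · have hu2 := hval u hu0 hu1
        by_cases hv0' : v = z0
        · rw [if_neg hu0, if_neg hu1, if_pos hv0', hv0', hv0]
          omega
        · by_cases hv1' : v = z1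
          · rw [if_neg hu0, if_neg hu1, if_neg hv0', if_pos hv1', hv1', hv1]
            omega
          · rw [if_neg hu0, if_neg hu1, if_neg hv0', if_neg hv1']
  have hltz : z0 < z1 := by rw [Fin.lt_def, hv0, hv1]; omega
  set F := Finset.univ.filter (fun p : Fin r × Fin r => e p.1 < e p.2) with hF
  have hmemF : (i, j) ∈ F := by
    rw [hF, Finset.mem_filter]
    exact ⟨Finset.mem_univ _, by rw [hei, hej]; exact hltz⟩
  have hF' : (Finset.univ.filter fun p : Fin r × Fin r =>
        (e.trans s) p.1 < (e.trans s) p.2)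
      = insert (j, i) (F.erase (i, j)) := by
    ext p
    obtain ⟨a, b⟩ := p
    rw [Finset.mem_filter]
    simp only [Finset.mem_insert, Finset.mem_erase, hF, Finset.mem_filter, Finset.mem_univ,
      true_and, Equiv.trans_apply, Prod.mk.injEq, ne_eq, not_and]
    by_cases hab1 : a = j ∧ b = i
    · obtain ⟨rfl, rfl⟩ := hab1
      rw [hej, hei]
      constructor
      · intro _
        exact Or.inl ⟨rfl, rfl⟩
      · intro _
        have h1 : (s z1 : ℕ) = 0 := by rw [hsv z1, if_neg (Ne.symm hz01), if_pos rfl]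
        have h2 : (s z0 : ℕ) = 1 := by rw [hsv z0, if_pos rfl]
        rw [Fin.lt_def, h1, h2]
        omega
    · by_cases hab2 : a = i ∧ b = j
      · obtain ⟨rfl, rfl⟩ := hab2
        rw [hei, hej]
        have h1 : (s z1 : ℕ) = 0 := by rw [hsv z1, if_neg (Ne.symm hz01), if_pos rfl]
        have h2 : (s z0 : ℕ) = 1 := by rw [hsv z0, if_pos rfl]
        constructor
        · intro hc
          rw [Fin.lt_def, h1, h2] at hc
          omega
        · intro hc
          rcases hc with ⟨h3, h4⟩ | ⟨h3, _⟩
          · exact absurd h3 hij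
          · exact absurd rfl (h3 rfl)
      · have hk : s (e a) < s (e b) ↔ e a < e b := by
          apply hkey
          · rw [heiz, hejz]
            exact fun hc => hab2 hc
          · rw [hejz, heiz]
            exact fun hc => hab1 hc
        rw [hk]
        constructor
        · intro hc
          refine Or.inr ⟨?_, hc⟩
          intro ha hb
          exact hab2 ⟨ha, hb⟩
        · rintro (⟨ha, hb⟩ | ⟨_, hc⟩)
          · exact absurd ⟨ha, hb⟩ hab1
          · exact hc
  have hnotin : (j, i) ∉ F.erase (i, j) := by
    rw [Finset.mem_erase, hF, Finset.mem_filter]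
    rintro ⟨-, -, hc⟩
    rw [hej, hei] at hc
    exact absurd hltz (not_lt_of_gt hc)
  have hld1 : ldSigma m e = m i j + ∑ p ∈ F.erase (i, j), m p.1 p.2 := by
    unfold ldSigma
    rw [← hF, ← Finset.add_sum_erase F (fun p => m p.1 p.2) hmemF]
  have hld2 : ldSigma m (e.trans s) = m j i + ∑ p ∈ F.erase (i, j), m p.1 p.2 := by
    unfold ldSigma
    rw [hF', Finset.sum_insert hnotin]
  have := hconst e (e.trans s)
  omega


def WSfun {r : ℕ} {n : Fin r → ℕ} (W : ∀ i, List (Fin (n i) × Bool)) (S : Finset (Fin r)) :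
    ∀ i, List (Fin (n i) × Bool) := fun i => if i ∈ S then (W i).reverse else W i

lemma aux_gauss_reverse {N : ℕ} {l : List (Fin N × Bool)} (h : IsGaussWord l) :
    IsGaussWord l.reverse := by
  intro i
  have hc : ∀ x : Fin N × Bool,
      @List.count _ instBEqProd x l.reverse = @List.count _ instBEqProd x l :=
    fun x => List.count_reverse
  exact ⟨by rw [hc]; exact (h i).1, by rw [hc]; exact (h i).2⟩



/-- `2 · d(|D|) = c(D)` iff every component is a simple closed curve
(`n i = 0`) and `m i j = m j i` for all `i ≠ j`. -/
theorem two_unoriented_wd_eq_crossingNum_iff (r : ℕ) (n : Fin r → ℕ)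
    (W : ∀ i, List (Fin (n i) × Bool)) (m : Fin r → Fin r → ℕ)
    (hW : ∀ i, IsGaussWord (W i)) (hm : ∀ i, m i i = 0) :
    2 * sInf {v | ∃ S : Finset (Fin r),
        v = linkWd (fun i => if i ∈ S then (W i).reverse else W i) m} =
      crossingNum n m ↔
    (∀ i, n i = 0) ∧ (∀ i j : Fin r, i ≠ j → m i j = m j i) := by
  classical
  set D : Set ℕ := {v | ∃ S : Finset (Fin r),
      v = linkWd (fun i => if i ∈ S then (W i).reverse else W i) m} with hD
  have hgauss : ∀ (S : Finset (Fin r)) (i : Fin r), IsGaussWord (WSfun W S i) := by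
    intro S i
    unfold WSfun
    split
    · exact aux_gauss_reverse (hW i)
    · exact hW i
  have hWSc : ∀ (S : Finset (Fin r)) (i : Fin r), WSfun W Sᶜ i = (WSfun W S i).reverse := by
    intro S i
    by_cases hi : i ∈ S
    · simp [WSfun, hi]
    · simp [WSfun, hi]
  have hcross : crossingNum n m = (∑ i, n i) + lcNum m := by
    rw [aux_lc_eq]
    rfl
  have hpair : ∀ (S : Finset (Fin r)) (σ : Equiv.Perm (Fin r)) (k : Fin r → ℕ),
      ∃ (S' : Finset (Fin r)) (σ' : Equiv.Perm (Fin r)) (k' : Fin r → ℕ),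
      ((∑ i, basedWd ((WSfun W S i).rotate (k i))) + ldSigma m σ)
        + ((∑ i, basedWd ((WSfun W S' i).rotate (k' i))) + ldSigma m σ')
        = crossingNum n m := by
    intro S σ k
    have hterm : ∀ i : Fin r,
        (WSfun W Sᶜ i).rotate ((WSfun W S i).length - k i % (WSfun W S i).length)
          = ((WSfun W S i).rotate (k i)).reverse := by
      intro i
      rw [hWSc S i, ← List.reverse_rotate]
    have hsum : (∑ i, basedWd ((WSfun W S i).rotate (k i)))
        + (∑ i, basedWd ((WSfun W Sᶜ i).rotate
            ((WSfun W S i).length - k i % (WSfun W S i).length))) = ∑ i, n i := by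
      rw [← Finset.sum_add_distrib]
      apply Finset.sum_congr rfl
      intro i _
      rw [hterm i]
      exact aux_basedWd_add_reverse (aux_gauss_rotate (hgauss S i) (k i))
    have hld := aux_ld_pair m σ
    refine ⟨Sᶜ, σ.trans Fin.revPerm,
      fun i => (WSfun W S i).length - k i % (WSfun W S i).length, ?_⟩
    show ((∑ i, basedWd ((WSfun W S i).rotate (k i))) + ldSigma m σ)
        + ((∑ i, basedWd ((WSfun W Sᶜ i).rotate
            ((WSfun W S i).length - k i % (WSfun W S i).length)))
          + ldSigma m (σ.trans Fin.revPerm)) = crossingNum n m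
    rw [hcross]
    omega
  constructor
  · intro heq
    have hXle : ∀ (S : Finset (Fin r)) (σ : Equiv.Perm (Fin r)) (k : Fin r → ℕ),
        sInf D ≤ (∑ i, basedWd ((WSfun W S i).rotate (k i))) + ldSigma m σ := by
      intro S σ k
      refine le_trans (Nat.sInf_le ⟨S, rfl⟩) ?_
      exact Nat.sInf_le ⟨σ, k, rfl⟩
    have hvX : ∀ (S : Finset (Fin r)) (σ : Equiv.Perm (Fin r)) (k : Fin r → ℕ),
        (∑ i, basedWd ((WSfun W S i).rotate (k i))) + ldSigma m σ = sInf D := by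
      intro S σ k
      obtain ⟨S', σ', k', hsum⟩ := hpair S σ k
      have h1 := hXle S σ k
      have h2 := hXle S' σ' k'
      omega
    have hldconst : ∀ σ σ' : Equiv.Perm (Fin r), ldSigma m σ = ldSigma m σ' := by
      intro σ σ'
      have h1 := hvX ∅ σ (fun _ => 0)
      have h2 := hvX ∅ σ' (fun _ => 0)
      omega
    refine ⟨?_, fun i j hij => aux_symm_of_const m hldconst hij⟩
    intro i
    by_contra hni
    have hne : W i ≠ [] := by
      intro hnil
      have h0 := (hW i ⟨0, Nat.pos_of_ne_zero hni⟩).1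
      rw [hnil] at h0
      simp at h0
    have h1 := hvX ∅ 1 (fun _ => 0)
    have h2 := hvX ∅ 1 (fun j => if j = i then 1 else 0)
    have e1 := Finset.add_sum_erase Finset.univ
      (fun j => basedWd ((WSfun W ∅ j).rotate ((fun _ => (0:ℕ)) j))) (Finset.mem_univ i)
    have e2 := Finset.add_sum_erase Finset.univ
      (fun j => basedWd ((WSfun W ∅ j).rotate ((fun j => if j = i then (1:ℕ) else 0) j)))
      (Finset.mem_univ i)
    simp only at h1 h2 e1 e2
    have e3 : ∑ j ∈ Finset.univ.erase i,
        basedWd ((WSfun W ∅ j).rotate (if j = i then 1 else 0))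
        = ∑ j ∈ Finset.univ.erase i, basedWd ((WSfun W ∅ j).rotate 0) := by
      apply Finset.sum_congr rfl
      intro j hj
      rw [if_neg (Finset.mem_erase.mp hj).1]
    have hWS0 : WSfun W ∅ i = W i := by simp [WSfun]
    rw [hWS0] at e1 e2
    simp only [if_true] at e2
    have hbne : basedWd ((W i).rotate 1) ≠ basedWd ((W i).rotate 0) := by
      rw [List.rotate_zero]
      exact aux_basedWd_rotate_one (hW i) hne
    omega
  · rintro ⟨hn0, hsym⟩
    have hld2 : ∀ σ : Equiv.Perm (Fin r), 2 * ldSigma m σ = lcNum m := by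
      intro σ
      have h1 := aux_ld_pair m σ
      rw [aux_ld_rev_symm m hsym σ] at h1
      omega
    have hb0 : ∀ (S : Finset (Fin r)) (i : Fin r) (k : ℕ),
        basedWd ((WSfun W S i).rotate k) = 0 := by
      intro S i k
      have h1 := aux_basedWd_le ((WSfun W S i).rotate k)
      have h2 := hn0 i
      omega
    have hL : ∀ σ : Equiv.Perm (Fin r), ldSigma m σ = ldSigma m 1 := by
      intro σ
      have ha := hld2 σ
      have hb := hld2 1
      omega
    have hlink : ∀ S : Finset (Fin r),
        linkWd (fun i => if i ∈ S then (W i).reverse else W i) m = ldSigma m 1 := by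
      intro S
      have hset : {v : ℕ | ∃ (σ : Equiv.Perm (Fin r)) (k : Fin r → ℕ),
          v = (∑ i, basedWd ((WSfun W S i).rotate (k i))) + ldSigma m σ}
          = {ldSigma m 1} := by
        ext v
        simp only [Set.mem_setOf_eq, Set.mem_singleton_iff]
        constructor
        · rintro ⟨σ, k, rfl⟩
          have hz : (∑ i, basedWd ((WSfun W S i).rotate (k i))) = 0 :=
            Finset.sum_eq_zero (fun i _ => hb0 S i (k i))
          rw [hz, hL σ, Nat.zero_add]
        · rintro rfl
          refine ⟨1, fun _ => 0, ?_⟩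
          have hz : (∑ i, basedWd ((WSfun W S i).rotate ((fun _ => (0:ℕ)) i))) = 0 :=
            Finset.sum_eq_zero (fun i _ => hb0 S i 0)
          rw [hz, Nat.zero_add]
      have h2 : linkWd (fun i => if i ∈ S then (W i).reverse else W i) m
          = sInf {v : ℕ | ∃ (σ : Equiv.Perm (Fin r)) (k : Fin r → ℕ),
            v = (∑ i, basedWd ((WSfun W S i).rotate (k i))) + ldSigma m σ} := rfl
      rw [h2, hset, csInf_singleton]
    have houter : D = {ldSigma m 1} := by
      rw [hD]
      ext v
      simp only [Set.mem_setOf_eq, Set.mem_singleton_iff]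
      constructor
      · rintro ⟨S, rfl⟩
        exact hlink S
      · rintro rfl
        exact ⟨∅, (hlink ∅).symm⟩
    rw [houter, csInf_singleton, hcross]
    have hz : (∑ i, n i) = 0 := Finset.sum_eq_zero (fun i _ => hn0 i)
    have := hld2 1
    omega
end
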